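/- arXiv:math/0109089 — 5 statements merged into one kernel-verified Lean document; each statement's English description precedes it below -/
import Mathlib

section
/- Let s ∈ ℂ with 2s ∉ ℤ. If a, b ∈ ℂ satisfy a·G_+(x,s) + b·G_−(x,s) = 0 for all x ∈ (0,1], then a = b = 0; that is, the two solutions G_+(·,s) and G_−(·,s) of the Yukawa equation are linearly independent on (0,1] when 2s is not an integer. -/
set_option maxHeartbeats 1000000

open Filter Topology


/-- `b_j^+(s) = (j! Γ(2s+j+1))⁻¹`, with the reciprocal Gamma convention
(Mathlib's `Complex.Gamma` vanishes at its poles). -/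
noncomputable def bcoef (s : ℂ) (j : ℕ) : ℂ :=
  ((j.factorial : ℂ) * Complex.Gamma (2 * s + (j : ℂ) + 1))⁻¹

/-- `G_+(x,s) = Σ_{j=0}^∞ b_j^+(s) x^{s+j}` for `x > 0`. -/
noncomputable def Gp (x : ℝ) (s : ℂ) : ℂ :=
  ∑' j : ℕ, bcoef s j * (x : ℂ) ^ (s + (j : ℂ))

/-- `G_-(x,s) = G_+(x,-s) = Σ_{j=0}^∞ b_j^-(s) x^{-s+j}` for `x > 0`. -/
noncomputable def Gm (x : ℝ) (s : ℂ) : ℂ := Gp x (-s)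


lemma arg_ne (s : ℂ) (hs : ∀ m : ℤ, 2 * s ≠ (m : ℂ)) (j : ℕ) :
    2 * s + (j : ℂ) + 1 ≠ 0 := by
  intro hm
  apply hs (-(j : ℤ) - 1)
  push_cast
  linear_combination hm

lemma bcoef_ne_zero (s : ℂ) (hs : ∀ m : ℤ, 2 * s ≠ (m : ℂ)) (j : ℕ) : bcoef s j ≠ 0 := by
  unfold bcoef
  apply inv_ne_zero
  apply mul_ne_zero
  · exact_mod_cast Nat.cast_ne_zero.mpr (Nat.factorial_ne_zero j)
  · apply Complex.Gamma_ne_zero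
    intro m hm
    apply hs (-(m : ℤ) - (j : ℤ) - 1)
    push_cast
    linear_combination hm

lemma bcoef_succ (s : ℂ) (hs : ∀ m : ℤ, 2 * s ≠ (m : ℂ)) (j : ℕ) :
    bcoef s (j + 1) = bcoef s j * (((j : ℂ) + 1) * (2 * s + (j : ℂ) + 1))⁻¹ := by
  have h1 : (2 * s + ((j : ℕ) + 1 : ℕ) + 1 : ℂ) = (2 * s + (j : ℂ) + 1) + 1 := by push_cast; ring
  unfold bcoef
  rw [h1, Complex.Gamma_add_one _ (arg_ne s hs j)]
  rw [Nat.factorial_succ]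
  push_cast
  simp only [mul_inv]
  ring

lemma norm_arg_eq (s : ℂ) (n : ℕ) :
    ‖(((n : ℂ) + 1) * (2 * s + (n : ℂ) + 1))⁻¹‖ = (((n : ℝ) + 1) * ‖2 * s + (n : ℂ) + 1‖)⁻¹ := by
  rw [norm_inv, norm_mul]
  congr 2
  have : ((n : ℂ) + 1) = ((n + 1 : ℕ) : ℂ) := by push_cast; ring
  rw [this, Complex.norm_natCast]
  push_cast; ring

lemma denom_tendsto (s : ℂ) :
    Tendsto (fun n : ℕ => ((n : ℝ) + 1) * ‖2 * s + (n : ℂ) + 1‖) atTop atTop := by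
  apply Tendsto.atTop_mul_atTop₀
  · exact tendsto_atTop_add_const_right atTop 1 tendsto_natCast_atTop_atTop
  · apply tendsto_atTop_mono (f := fun n : ℕ => (n : ℝ) - ‖2 * s + 1‖)
    · intro n
      have h1 : (n : ℂ) = (2 * s + (n : ℂ) + 1) - (2 * s + 1) := by ring
      have h2 : ‖(n : ℂ)‖ ≤ ‖2 * s + (n : ℂ) + 1‖ + ‖2 * s + 1‖ := by
        conv_lhs => rw [h1]
        exact norm_sub_le _ _
      rw [Complex.norm_natCast] at h2
      linarith
    · exact tendsto_atTop_add_const_right atTop _ tendsto_natCast_atTop_atTop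

lemma summable_norm_bcoef_pow (s : ℂ) (hs : ∀ m : ℤ, 2 * s ≠ (m : ℂ)) {x : ℝ} (hx : 0 < x) :
    Summable (fun j : ℕ => ‖bcoef s j‖ * x ^ j) := by
  have hbpos : ∀ n : ℕ, 0 < ‖bcoef s n‖ := fun n => by
    exact norm_pos_iff.mpr (bcoef_ne_zero s hs n)
  have hfpos : ∀ n : ℕ, 0 < ‖bcoef s n‖ * x ^ n := fun n =>
    mul_pos (hbpos n) (pow_pos hx n)
  apply summable_of_ratio_test_tendsto_lt_one (l := 0) zero_lt_one
  · exact Eventually.of_forall fun n => (hfpos n).ne'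
  · have key : ∀ n : ℕ, ‖‖bcoef s (n + 1)‖ * x ^ (n + 1)‖ / ‖‖bcoef s n‖ * x ^ n‖ =
        x / (((n : ℝ) + 1) * ‖2 * s + (n : ℂ) + 1‖) := by
      intro n
      rw [Real.norm_of_nonneg (hfpos (n + 1)).le, Real.norm_of_nonneg (hfpos n).le,
        bcoef_succ s hs n, norm_mul, norm_arg_eq s n, pow_succ]
      have hb : ‖bcoef s n‖ ≠ 0 := (hbpos n).ne'
      have hxn : x ^ n ≠ 0 := (pow_pos hx n).ne'
      have hA : ‖2 * s + (n : ℂ) + 1‖ ≠ 0 := norm_ne_zero_iff.mpr (arg_ne s hs n)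
      have hn1 : ((n : ℝ) + 1) ≠ 0 := by positivity
      have hD : ((n : ℝ) + 1) * ‖2 * s + (n : ℂ) + 1‖ ≠ 0 := mul_ne_zero hn1 hA
      rw [div_eq_div_iff (hfpos n).ne' hD]
      have hc := inv_mul_cancel₀ hD
      linear_combination (‖bcoef s n‖ * x ^ n * x) * hc
    simp only [key]
    exact Tendsto.div_atTop tendsto_const_nhds (denom_tendsto s)

noncomputable def Fser (s : ℂ) (x : ℝ) : ℂ := ∑' j : ℕ, bcoef s j * (x : ℂ) ^ j

lemma norm_term (s : ℂ) {x : ℝ} (hx : 0 ≤ x) (j : ℕ) :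
    ‖bcoef s j * (x : ℂ) ^ j‖ = ‖bcoef s j‖ * x ^ j := by
  rw [norm_mul, norm_pow, Complex.norm_real, Real.norm_of_nonneg hx]

lemma summable_F (s : ℂ) (hs : ∀ m : ℤ, 2 * s ≠ (m : ℂ)) {x : ℝ} (hx : 0 < x) :
    Summable (fun j : ℕ => bcoef s j * (x : ℂ) ^ j) := by
  apply Summable.of_norm
  simpa only [norm_term s hx.le] using summable_norm_bcoef_pow s hs hx

lemma summable_norm_b (s : ℂ) (hs : ∀ m : ℤ, 2 * s ≠ (m : ℂ)) :
    Summable (fun j : ℕ => ‖bcoef s j‖) := by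
  simpa using summable_norm_bcoef_pow s hs (x := 1) one_pos

lemma Gp_eq (s : ℂ) (hs : ∀ m : ℤ, 2 * s ≠ (m : ℂ)) {x : ℝ} (hx : 0 < x) :
    Gp x s = (x : ℂ) ^ s * Fser s x := by
  have hx0 : (x : ℂ) ≠ 0 := Complex.ofReal_ne_zero.mpr hx.ne'
  unfold Gp Fser
  rw [← tsum_mul_left]
  congr 1
  funext j
  rw [Complex.cpow_add _ _ hx0, Complex.cpow_natCast]
  ring

lemma tail_bound (s : ℂ) (hs : ∀ m : ℤ, 2 * s ≠ (m : ℂ)) {x : ℝ} (hx : 0 < x) (hx1 : x ≤ 1) :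
    ‖Fser s x - bcoef s 0‖ ≤ (∑' j : ℕ, ‖bcoef s (j + 1)‖) * x := by
  have hsum := summable_F s hs hx
  have hnorm : Summable (fun j : ℕ => ‖bcoef s j‖ * x ^ j) := summable_norm_bcoef_pow s hs hx
  have hshift : Summable (fun j : ℕ => ‖bcoef s (j + 1) * (x : ℂ) ^ (j + 1)‖) := by
    simp only [norm_term s hx.le]
    exact (summable_nat_add_iff 1).mpr hnorm
  have hB : Summable (fun j : ℕ => ‖bcoef s (j + 1)‖) :=
    (summable_nat_add_iff 1).mpr (summable_norm_b s hs)
  have h0 : Fser s x - bcoef s 0 = ∑' j : ℕ, bcoef s (j + 1) * (x : ℂ) ^ (j + 1) := by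
    unfold Fser
    rw [Summable.tsum_eq_zero_add hsum]
    simp
  rw [h0]
  calc ‖∑' j : ℕ, bcoef s (j + 1) * (x : ℂ) ^ (j + 1)‖
      ≤ ∑' j : ℕ, ‖bcoef s (j + 1) * (x : ℂ) ^ (j + 1)‖ := norm_tsum_le_tsum_norm hshift
    _ ≤ ∑' j : ℕ, ‖bcoef s (j + 1)‖ * x := by
        apply Summable.tsum_le_tsum _ hshift (hB.mul_right x)
        intro j
        rw [norm_term s hx.le]
        apply mul_le_mul_of_nonneg_left _ (norm_nonneg _)
        calc x ^ (j + 1) ≤ x ^ 1 := pow_le_pow_of_le_one hx.le hx1 (by omega)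
          _ = x := pow_one x
    _ = (∑' j : ℕ, ‖bcoef s (j + 1)‖) * x := tsum_mul_right

lemma tendsto_F (s : ℂ) (hs : ∀ m : ℤ, 2 * s ≠ (m : ℂ)) :
    Tendsto (fun x : ℝ => Fser s x) (𝓝[Set.Ioc 0 1] 0) (𝓝 (bcoef s 0)) := by
  rw [tendsto_iff_norm_sub_tendsto_zero]
  apply squeeze_zero' (Eventually.of_forall fun _ => norm_nonneg _)
    (g := fun x : ℝ => (∑' j : ℕ, ‖bcoef s (j + 1)‖) * x)
  · filter_upwards [self_mem_nhdsWithin] with x hx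
    exact tail_bound s hs hx.1 hx.2
  · have : Tendsto (fun x : ℝ => (∑' j : ℕ, ‖bcoef s (j + 1)‖) * x) (𝓝 0)
        (𝓝 ((∑' j : ℕ, ‖bcoef s (j + 1)‖) * 0)) := tendsto_id.const_mul _
    rw [mul_zero] at this
    exact this.mono_left nhdsWithin_le_nhds

lemma neBot_Ioc : (𝓝[Set.Ioc (0:ℝ) 1] 0).NeBot := by
  apply mem_closure_iff_nhdsWithin_neBot.mp
  rw [closure_Ioc (zero_ne_one)]
  exact ⟨le_refl 0, zero_le_one⟩

lemma hs_neg (s : ℂ) (hs : ∀ m : ℤ, 2 * s ≠ (m : ℂ)) : ∀ m : ℤ, 2 * (-s) ≠ (m : ℂ) := by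
  intro m hm
  apply hs (-m)
  push_cast
  linear_combination -hm

lemma heq_aux (s : ℂ) (hs : ∀ m : ℤ, 2 * s ≠ (m : ℂ)) (a b : ℂ)
    (h : ∀ x : ℝ, 0 < x → x ≤ 1 → a * Gp x s + b * Gm x s = 0) :
    ∀ x : ℝ, 0 < x → x ≤ 1 →
      a * ((x : ℂ) ^ (2 * s) * Fser s x) + b * Fser (-s) x = 0 := by
  intro x hx hx1
  have hx0 : (x : ℂ) ≠ 0 := Complex.ofReal_ne_zero.mpr hx.ne'
  have h3 := h x hx hx1
  rw [Gm, Gp_eq s hs hx, Gp_eq (-s) (hs_neg s hs) hx] at h3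
  have hss : (x : ℂ) ^ s * (x : ℂ) ^ (-s) = 1 := by
    rw [← Complex.cpow_add _ _ hx0]
    simp
  have h2s : (x : ℂ) ^ s * (x : ℂ) ^ s = (x : ℂ) ^ (2 * s) := by
    rw [← Complex.cpow_add _ _ hx0, two_mul]
  linear_combination ((x : ℂ) ^ s) * h3 - (a * Fser s x) * h2s - (b * Fser (-s) x) * hss

lemma key (s : ℂ) (hs : ∀ m : ℤ, 2 * s ≠ (m : ℂ))
    (hre : 0 < s.re ∨ (s.re = 0 ∧ 0 < s.im)) (a b : ℂ)
    (h : ∀ x : ℝ, 0 < x → x ≤ 1 → a * Gp x s + b * Gm x s = 0) :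
    a = 0 ∧ b = 0 := by
  have hsneg := hs_neg s hs
  have hc : bcoef s 0 ≠ 0 := bcoef_ne_zero s hs 0
  have hd : bcoef (-s) 0 ≠ 0 := bcoef_ne_zero (-s) hsneg 0
  have heq := heq_aux s hs a b h
  have hl : (𝓝[Set.Ioc (0:ℝ) 1] 0).NeBot := neBot_Ioc
  rcases hre with hre | ⟨hre, him⟩
  · -- Re s > 0
    have h2s0 : (2 * s) ≠ 0 := by
      intro h0; exact hs 0 (by simpa using h0)
    have hlim2s : Tendsto (fun x : ℝ => (x : ℂ) ^ (2 * s)) (𝓝[Set.Ioc 0 1] 0) (𝓝 0) := by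
      have hcont := Complex.continuousAt_ofReal_cpow_const 0 (2 * s)
        (Or.inl (by simpa [Complex.mul_re] using by linarith [hre] : 0 < (2 * s).re))
      have h2 := hcont.tendsto
      rw [Complex.ofReal_zero, Complex.zero_cpow h2s0] at h2
      exact h2.mono_left nhdsWithin_le_nhds
    have T : Tendsto (fun x : ℝ => a * ((x : ℂ) ^ (2 * s) * Fser s x) + b * Fser (-s) x)
        (𝓝[Set.Ioc 0 1] 0) (𝓝 (a * (0 * bcoef s 0) + b * bcoef (-s) 0)) :=
      ((hlim2s.mul (tendsto_F s hs)).const_mul a).add ((tendsto_F (-s) hsneg).const_mul b)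
    have T0 : Tendsto (fun x : ℝ => a * ((x : ℂ) ^ (2 * s) * Fser s x) + b * Fser (-s) x)
        (𝓝[Set.Ioc 0 1] 0) (𝓝 0) := by
      apply Tendsto.congr' _ tendsto_const_nhds
      filter_upwards [self_mem_nhdsWithin] with x hx
      exact (heq x hx.1 hx.2).symm
    have hbd : a * (0 * bcoef s 0) + b * bcoef (-s) 0 = 0 := tendsto_nhds_unique T T0
    have hb : b = 0 := by
      have hbd' : b * bcoef (-s) 0 = 0 := by linear_combination hbd
      rcases mul_eq_zero.mp hbd' with h' | h'
      · exact h'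
      · exact absurd h' hd
    refine ⟨?_, hb⟩
    have hev : ∀ᶠ x in 𝓝[Set.Ioc (0:ℝ) 1] 0, Fser s x ≠ 0 :=
      (tendsto_F s hs).eventually_ne hc
    obtain ⟨x, hFx2, hx⟩ := (hev.and self_mem_nhdsWithin).exists
    have := heq x hx.1 hx.2
    rw [hb, zero_mul, add_zero, mul_eq_zero, mul_eq_zero] at this
    rcases this with h' | h' | h'
    · exact h'
    · exact absurd h' (by
        rw [Complex.cpow_eq_zero_iff]
        push_neg
        intro h''
        exact absurd h'' (Complex.ofReal_ne_zero.mpr hx.1.ne'))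
    · exact absurd h' hFx2
  · -- Re s = 0, Im s > 0
    set t := s.im with ht
    set q : ℝ := Real.exp (-Real.pi / (2 * t)) with hqdef
    have hq0 : 0 < q := Real.exp_pos _
    have hq1 : q < 1 := by
      rw [hqdef]
      apply Real.exp_lt_one_iff.mpr
      rw [neg_div]
      have : 0 < Real.pi / (2 * t) := by positivity
      linarith
    set X : ℕ → ℝ := fun n => q ^ n with hX
    have hX0 : ∀ n, 0 < X n := fun n => pow_pos hq0 n
    have hX1 : ∀ n, X n ≤ 1 := fun n => pow_le_one₀ hq0.le hq1.le
    have hs2 : 2 * s = 2 * t * Complex.I := by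
      rw [← Complex.re_add_im s, hre]
      push_cast
      ring
    have hcpow : ∀ n : ℕ, ((X n : ℝ) : ℂ) ^ (2 * s) = (-1 : ℂ) ^ n := by
      intro n
      have hxn0 : ((X n : ℝ) : ℂ) ≠ 0 := Complex.ofReal_ne_zero.mpr (hX0 n).ne'
      rw [Complex.cpow_def_of_ne_zero hxn0]
      have hlog : Complex.log ((X n : ℝ) : ℂ) = ((n * (-Real.pi / (2 * t)) : ℝ) : ℂ) := by
        rw [← Complex.ofReal_log (hX0 n).le]
        congr 1
        rw [hX]
        simp only [Real.log_pow, hqdef, Real.log_exp]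
      rw [hlog, hs2]
      have harg : ((n * (-Real.pi / (2 * t)) : ℝ) : ℂ) * (2 * t * Complex.I)
          = (n : ℂ) * (-(Real.pi) * Complex.I) := by
        have ht0 : (t : ℂ) ≠ 0 := by
          exact_mod_cast him.ne'
        push_cast
        field_simp
      rw [harg, Complex.exp_nat_mul]
      congr 1
      have : -(Real.pi : ℂ) * Complex.I = -((Real.pi : ℂ) * Complex.I) := by ring
      rw [this, Complex.exp_neg, Complex.exp_pi_mul_I]
      norm_num
    have eqn : ∀ n : ℕ, a * ((-1 : ℂ) ^ n * Fser s (X n)) + b * Fser (-s) (X n) = 0 := by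
      intro n
      have := heq (X n) (hX0 n) (hX1 n)
      rwa [hcpow n] at this
    have hseq : Tendsto X atTop (𝓝[Set.Ioc (0:ℝ) 1] 0) := by
      apply tendsto_nhdsWithin_of_tendsto_nhds_of_eventually_within
      · exact tendsto_pow_atTop_nhds_zero_of_lt_one hq0.le hq1
      · exact Eventually.of_forall fun n => ⟨hX0 n, hX1 n⟩
    have h2n : Tendsto (fun n : ℕ => 2 * n) atTop atTop :=
      StrictMono.tendsto_atTop (fun p q hpq => by omega)
    have h2n1 : Tendsto (fun n : ℕ => 2 * n + 1) atTop atTop :=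
      StrictMono.tendsto_atTop (fun p q hpq => by omega)
    have Teven : Tendsto (fun n : ℕ => a * Fser s (X (2 * n)) + b * Fser (-s) (X (2 * n)))
        atTop (𝓝 (a * bcoef s 0 + b * bcoef (-s) 0)) :=
      (((tendsto_F s hs).comp (hseq.comp h2n)).const_mul a).add
        (((tendsto_F (-s) hsneg).comp (hseq.comp h2n)).const_mul b)
    have Todd : Tendsto (fun n : ℕ => -(a * Fser s (X (2 * n + 1))) + b * Fser (-s) (X (2 * n + 1)))
        atTop (𝓝 (-(a * bcoef s 0) + b * bcoef (-s) 0)) :=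
      (((tendsto_F s hs).comp (hseq.comp h2n1)).const_mul a).neg.add
        (((tendsto_F (-s) hsneg).comp (hseq.comp h2n1)).const_mul b)
    have e1 : a * bcoef s 0 + b * bcoef (-s) 0 = 0 := by
      apply tendsto_nhds_unique Teven
      apply Tendsto.congr' _ tendsto_const_nhds
      apply Eventually.of_forall
      intro n
      have := eqn (2 * n)
      rw [pow_mul] at this
      simpa using this.symm
    have e2 : -(a * bcoef s 0) + b * bcoef (-s) 0 = 0 := by
      apply tendsto_nhds_unique Todd
      apply Tendsto.congr' _ tendsto_const_nhds
      apply Eventually.of_forall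
      intro n
      have := eqn (2 * n + 1)
      rw [pow_succ, pow_mul] at this
      simp only [neg_one_sq, one_pow, one_mul, mul_neg_one] at this
      linear_combination -this
    have hac : a * bcoef s 0 = 0 := by linear_combination (e1 - e2) / 2
    have hbd : b * bcoef (-s) 0 = 0 := by linear_combination (e1 + e2) / 2
    exact ⟨by rcases mul_eq_zero.mp hac with h' | h'; exact h'; exact absurd h' hc,
      by rcases mul_eq_zero.mp hbd with h' | h'; exact h'; exact absurd h' hd⟩

/-- if `2s ∉ ℤ`, then `G_+(·,s)` and `G_-(·,s)` are linearly independent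
on `(0,1]`: a vanishing linear combination has zero coefficients. -/
theorem Gp_Gm_linearly_independent (s : ℂ) (hs : ∀ m : ℤ, 2 * s ≠ (m : ℂ)) (a b : ℂ)
    (h : ∀ x : ℝ, 0 < x → x ≤ 1 → a * Gp x s + b * Gm x s = 0) :
    a = 0 ∧ b = 0 := by
  have hsneg := hs_neg s hs
  have hswap : ∀ x : ℝ, 0 < x → x ≤ 1 → b * Gp x (-s) + a * Gm x (-s) = 0 := by
    intro x hx hx1
    have h' := h x hx hx1
    rw [Gm, neg_neg]
    rw [Gm] at h'
    linear_combination h'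
  have hs0 : s ≠ 0 := by
    intro h0
    exact hs 0 (by simp [h0])
  rcases lt_trichotomy 0 s.re with hre | hre | hre
  · exact key s hs (Or.inl hre) a b h
  · rcases lt_trichotomy 0 s.im with him | him | him
    · exact key s hs (Or.inr ⟨hre.symm, him⟩) a b h
    · exact absurd (Complex.ext hre.symm him.symm) hs0
    · have := key (-s) hsneg
        (Or.inr ⟨by simp [Complex.neg_re, ← hre], by simp only [Complex.neg_im]; linarith⟩)
        b a hswap
      exact ⟨this.2, this.1⟩
  · have := key (-s) hsneg (Or.inl (by simp only [Complex.neg_re]; linarith)) b a hswap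
    exact ⟨this.2, this.1⟩
end

section
/- Let l ∈ ℕ and suppose G_+(1, l/2) ≠ 0. Then the scattering coefficient S(s) = −G_−(1,s)·Γ(1−2s) / (G_+(1,s)·Γ(1+2s)) of the Yukawa potential has a simple pole at s = l/2 with residue −p_l, where p_l = (−1)^l/(2·l!·(l−1)!); precisely, (s − l/2)·S(s) tends to (−1)^{l+1}/(2·l!·(l−1)!) as s → l/2 through values s ≠ l/2. -/
/-- The Yukawa scattering coefficient
`S(s) = −G_−(1,s)·Γ(1−2s) / (G_+(1,s)·Γ(1+2s))`. -/
noncomputable def Syu (s : ℂ) : ℂ :=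
  -Gm 1 s * Complex.Gamma (1 - 2 * s) / (Gp 1 s * Complex.Gamma (1 + 2 * s))


section YukawaAux

open Complex Filter Metric

lemma norm_Gamma_mul_fact_le {w : ℂ} (hw : 1 ≤ w.re) (j : ℕ) :
    ‖Complex.Gamma w‖ * j.factorial ≤ ‖Complex.Gamma (w + j)‖ := by
  induction j with
  | zero => simp
  | succ n ih =>
    have hre : (1 : ℝ) + n ≤ (w + n).re := by
      simp only [Complex.add_re, Complex.natCast_re]
      linarith
    have hne : w + (n : ℂ) ≠ 0 := by
      intro h
      rw [h] at hre
      simp at hre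
      have : (0:ℝ) ≤ (n:ℝ) := n.cast_nonneg
      linarith
    have hrec : Complex.Gamma (w + (n + 1 : ℕ)) = (w + n) * Complex.Gamma (w + n) := by
      have := Complex.Gamma_add_one (w + n) hne
      rw [← this]
      push_cast
      ring_nf
    have hnorm : (1 : ℝ) + n ≤ ‖w + (n : ℂ)‖ := le_trans hre (Complex.re_le_norm _)
    calc ‖Complex.Gamma w‖ * (n + 1).factorial
        = ((1:ℝ) + n) * (‖Complex.Gamma w‖ * n.factorial) := by
          rw [Nat.factorial_succ]; push_cast; ring
      _ ≤ ‖w + (n:ℂ)‖ * ‖Complex.Gamma (w + n)‖ := by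
          apply mul_le_mul hnorm ih (by positivity)
          exact norm_nonneg _
      _ = ‖Complex.Gamma (w + (n + 1 : ℕ))‖ := by rw [hrec, norm_mul]

lemma exists_bcoef_bound (s₀ : ℂ) : ∃ N : ℕ, ∃ c : ℝ, 0 < c ∧
    ∀ s ∈ Metric.closedBall s₀ 1, ∀ j, N ≤ j →
      ‖bcoef s j‖ ≤ c⁻¹ * (1 / (j - N).factorial) := by
  set N : ℕ := ⌈2 * ‖s₀‖⌉₊ + 2 with hN
  have hre : ∀ s ∈ Metric.closedBall s₀ 1, 1 ≤ (2 * s + N + 1).re := by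
    intro s hs
    have h1 : ‖s‖ ≤ ‖s₀‖ + 1 := by
      have := mem_closedBall_iff_norm.mp hs
      calc ‖s‖ = ‖s - s₀ + s₀‖ := by ring_nf
        _ ≤ ‖s - s₀‖ + ‖s₀‖ := norm_add_le _ _
        _ ≤ ‖s₀‖ + 1 := by linarith
    have h2 : -(2 * ‖s₀‖ + 2) ≤ (2 * s).re := by
      have : |(2 * s).re| ≤ ‖2 * s‖ := Complex.abs_re_le_norm _
      have h3 : ‖(2:ℂ) * s‖ = 2 * ‖s‖ := by
        rw [norm_mul]; norm_num
      nlinarith [abs_nonneg (2*s).re, neg_abs_le (2*s).re]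
    have h4 : 2 * ‖s₀‖ ≤ (⌈2 * ‖s₀‖⌉₊ : ℝ) := Nat.le_ceil _
    simp only [Complex.add_re, Complex.natCast_re, Complex.one_re]
    push_cast [hN]
    linarith
  -- min of ‖Γ(2s+N+1)‖ on the closed ball
  have hcont : ContinuousOn (fun s : ℂ => ‖Complex.Gamma (2 * s + N + 1)‖)
      (Metric.closedBall s₀ 1) := by
    intro s hs
    have hd : DifferentiableAt ℂ Complex.Gamma (2 * s + N + 1) := by
      apply Complex.differentiableAt_Gamma
      intro m h
      have := hre s hs
      rw [h] at this
      simp only [Complex.neg_re, Complex.natCast_re] at this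
      have : (0:ℝ) ≤ (m:ℝ) := m.cast_nonneg
      linarith
    have : ContinuousAt (fun s : ℂ => Complex.Gamma (2 * s + N + 1)) s := by
      exact ContinuousAt.comp hd.continuousAt (by fun_prop)
    exact this.norm.continuousWithinAt
  obtain ⟨smin, hsmin, hmin⟩ := (isCompact_closedBall s₀ 1).exists_isMinOn
    ⟨s₀, Metric.mem_closedBall_self zero_le_one⟩ hcont
  set c : ℝ := ‖Complex.Gamma (2 * smin + N + 1)‖ with hc
  have hcpos : 0 < c := by
    rw [hc, norm_pos_iff]
    apply Complex.Gamma_ne_zero_of_re_pos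
    linarith [hre smin hsmin]
  refine ⟨N, c, hcpos, fun s hs j hj => ?_⟩
  set k := j - N with hk
  have hjk : j = N + k := by omega
  have hcast : 2 * s + (j : ℂ) + 1 = (2 * s + N + 1) + k := by
    rw [hjk]; push_cast; ring
  have hlow : c * k.factorial ≤ ‖Complex.Gamma (2 * s + (j:ℂ) + 1)‖ := by
    rw [hcast]
    calc c * k.factorial ≤ ‖Complex.Gamma (2*s+N+1)‖ * k.factorial := by
          have := hmin hs
          apply mul_le_mul_of_nonneg_right this (by positivity)
      _ ≤ _ := norm_Gamma_mul_fact_le (hre s hs) k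
  have hfact1 : (1:ℝ) ≤ j.factorial := by exact_mod_cast j.factorial_pos
  rw [bcoef, norm_inv, norm_mul]
  have h5 : ‖((j.factorial : ℕ) : ℂ)‖ = (j.factorial : ℝ) := by
    simp [Complex.norm_natCast]
  rw [h5]
  rw [mul_inv]
  calc (↑j.factorial : ℝ)⁻¹ * ‖Complex.Gamma (2 * s + ↑j + 1)‖⁻¹
      ≤ 1 * ‖Complex.Gamma (2 * s + ↑j + 1)‖⁻¹ := by
        apply mul_le_mul_of_nonneg_right _ (by positivity)
        rw [inv_le_one_iff₀]; right; exact hfact1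
    _ ≤ 1 * (c * k.factorial)⁻¹ := by
        apply mul_le_mul_of_nonneg_left _ (by norm_num)
        apply inv_anti₀ (by positivity) hlow
    _ = c⁻¹ * (1 / k.factorial) := by rw [mul_inv]; ring

lemma bcoef_continuous (j : ℕ) : Continuous fun s : ℂ => bcoef s j := by
  simp only [bcoef, mul_inv]
  apply continuous_const.mul
  exact Complex.differentiable_one_div_Gamma.continuous.comp (by fun_prop)

lemma summable_aux (N : ℕ) (c : ℝ) (hc : 0 < c) :
    Summable (fun j : ℕ => c⁻¹ * (1 / ((j - N).factorial : ℝ))) := by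
  rw [← summable_nat_add_iff N]
  have : Summable (fun k : ℕ => c⁻¹ * (1 / (k.factorial : ℝ))) := by
    simpa using (Real.summable_pow_div_factorial 1).mul_left c⁻¹
  apply this.congr
  intro k
  simp [Nat.add_sub_cancel]

lemma bcoef_summable (s : ℂ) : Summable (bcoef s) := by
  obtain ⟨N, c, hc, hb⟩ := exists_bcoef_bound s
  apply Summable.of_norm_bounded_eventually (summable_aux N c hc)
  rw [Nat.cofinite_eq_atTop, eventually_atTop]
  exact ⟨N, fun j hj => hb s (Metric.mem_closedBall_self zero_le_one) j hj⟩

lemma tsum_bcoef_continuousAt (s₀ : ℂ) :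
    ContinuousAt (fun s : ℂ => ∑' j, bcoef s j) s₀ := by
  obtain ⟨N, c, hc, hb⟩ := exists_bcoef_bound s₀
  have hcof : ∀ᶠ j in cofinite, ∀ x ∈ Metric.closedBall s₀ 1,
      ‖bcoef x j‖ ≤ c⁻¹ * (1 / ((j - N).factorial : ℝ)) := by
    rw [Nat.cofinite_eq_atTop, eventually_atTop]
    exact ⟨N, fun j hj x hx => hb x hx j hj⟩
  have hco : ContinuousOn (fun s : ℂ => ∑' j, bcoef s j) (Metric.closedBall s₀ 1) := by
    apply (tendstoUniformlyOn_tsum_of_cofinite_eventually (summable_aux N c hc)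
      hcof).continuousOn
    exact Frequently.of_forall fun t =>
      continuousOn_finset_sum _ fun i _ => (bcoef_continuous i).continuousOn
  exact hco.continuousAt (Metric.closedBall_mem_nhds s₀ one_pos)

lemma Gp_one (s : ℂ) : Gp 1 s = ∑' j, bcoef s j := by
  simp [Gp, Complex.one_cpow]

lemma Gm_eq_Gp (l : ℕ) (hl : 0 < l) : Gm 1 ((l : ℂ) / 2) = Gp 1 ((l : ℂ) / 2) := by
  rw [Gm, Gp_one, Gp_one]
  have h1 : ∀ j : ℕ, bcoef (-((l:ℂ)/2)) j =
      ((j.factorial : ℂ) * Complex.Gamma (-(l:ℂ) + j + 1))⁻¹ := by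
    intro j; rw [bcoef]; ring_nf
  have h2 : ∀ j : ℕ, bcoef ((l:ℂ)/2) j = ((j.factorial : ℂ) * ((l + j).factorial : ℂ))⁻¹ := by
    intro j
    rw [bcoef]
    congr 2
    have : 2 * ((l:ℂ)/2) + j + 1 = ((l + j : ℕ) : ℂ) + 1 := by push_cast; ring
    rw [this, Complex.Gamma_nat_eq_factorial]
  calc ∑' j, bcoef (-((l:ℂ)/2)) j
      = ∑ j ∈ Finset.range l, bcoef (-((l:ℂ)/2)) j + ∑' k, bcoef (-((l:ℂ)/2)) (k + l) :=
        ((bcoef_summable _).sum_add_tsum_nat_add l).symm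
    _ = ∑' k, bcoef (-((l:ℂ)/2)) (k + l) := by
        rw [Finset.sum_eq_zero, zero_add]
        intro j hj
        rw [h1]
        have hj' : j < l := Finset.mem_range.mp hj
        have : (-(l:ℂ) + j + 1) = -((l - 1 - j : ℕ) : ℂ) := by
          push_cast [Nat.cast_sub (by omega : j ≤ l - 1), Nat.cast_sub (by omega : 1 ≤ l)]
          ring
        rw [this, Complex.Gamma_neg_nat_eq_zero, mul_zero, inv_zero]
    _ = ∑' k, bcoef ((l:ℂ)/2) k := by
        apply tsum_congr
        intro k
        rw [h1, h2]
        have : (-(l:ℂ) + (k + l : ℕ) + 1) = ((k:ℕ) : ℂ) + 1 := by push_cast; ring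
        rw [this, Complex.Gamma_nat_eq_factorial]
        rw [mul_comm]
        congr 4
        omega

lemma sin_nat_shift (l : ℕ) (s : ℂ) :
    Complex.sin (2 * ↑Real.pi * s) =
      (-1) ^ l * Complex.sin (2 * ↑Real.pi * (s - l / 2)) := by
  have h : 2 * (↑Real.pi : ℂ) * s = 2 * ↑Real.pi * (s - l / 2) + ↑(l * Real.pi : ℝ) := by
    push_cast; ring
  rw [h, Complex.sin_add]
  have hs : Complex.sin ((l * Real.pi : ℝ) : ℂ) = 0 := by
    rw [← Complex.ofReal_sin, Real.sin_nat_mul_pi, Complex.ofReal_zero]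
  have hc : Complex.cos ((l * Real.pi : ℝ) : ℂ) = (-1) ^ l := by
    rw [← Complex.ofReal_cos]
    have := Real.cos_nat_mul_pi_sub 0 l
    rw [sub_zero, Real.cos_zero, mul_one] at this
    rw [this]
    push_cast; ring
  rw [hs, hc, mul_zero, add_zero, mul_comm]

lemma tendsto_inv_mul_sin :
    Filter.Tendsto (fun h : ℂ => h⁻¹ * Complex.sin (2 * ↑Real.pi * h))
      (nhdsWithin 0 {(0:ℂ)}ᶜ) (nhds (2 * ↑Real.pi)) := by
  have h2 : HasDerivAt (fun h : ℂ => 2 * ↑Real.pi * h) (2 * ↑Real.pi) 0 := by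
    simpa using (hasDerivAt_id (0:ℂ)).const_mul (2 * (Real.pi : ℂ))
  have h1 : HasDerivAt Complex.sin (Complex.cos (2 * ↑Real.pi * 0)) (2 * ↑Real.pi * 0) :=
    Complex.hasDerivAt_sin _
  have hD : HasDerivAt (fun h : ℂ => Complex.sin (2 * ↑Real.pi * h)) (2 * ↑Real.pi) 0 := by
    have := h1.comp 0 h2
    simpa [Function.comp_def] using this
  have := hasDerivAt_iff_tendsto_slope.mp hD
  apply this.congr
  intro x
  simp [slope_def_field, div_eq_inv_mul]

set_option maxHeartbeats 1000000

/-- if `G_+(1,l/2) ≠ 0` then `S(s)` has a simple pole at `s = l/2`: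
`(s − l/2)·S(s) → (−1)^{l+1}/(2·l!·(l−1)!)` as `s → l/2`, `s ≠ l/2`. -/
theorem Syu_simple_pole_at_half_integers (l : ℕ) (hl : 0 < l)
    (hG : Gp 1 ((l : ℂ) / 2) ≠ 0) :
    Filter.Tendsto (fun s : ℂ => (s - (l : ℂ) / 2) * Syu s)
      (nhdsWithin ((l : ℂ) / 2) {(l : ℂ) / 2}ᶜ)
      (nhds ((-1 : ℂ) ^ (l + 1) /
        (2 * (l.factorial : ℂ) * ((l - 1).factorial : ℂ)))) := by
  set c : ℂ := (l : ℂ) / 2 with hc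
  set F := nhdsWithin c {c}ᶜ with hF
  set A : ℂ := Gp 1 c with hA
  have hπ : (Real.pi : ℂ) ≠ 0 := Complex.ofReal_ne_zero.mpr Real.pi_ne_zero
  have h2π : (2 : ℂ) * Real.pi ≠ 0 := mul_ne_zero two_ne_zero hπ
  -- continuity of Gp 1
  have hGpc : ∀ z : ℂ, ContinuousAt (fun s : ℂ => Gp 1 s) z := by
    intro z
    simp only [Gp_one]
    exact tsum_bcoef_continuousAt z
  have hGp_t : Tendsto (fun s : ℂ => Gp 1 s) F (nhds A) :=
    ((hGpc c).tendsto).mono_left nhdsWithin_le_nhds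
  have hGm_t : Tendsto (fun s : ℂ => Gm 1 s) F (nhds A) := by
    have hcont : ContinuousAt (fun s : ℂ => Gm 1 s) c := by
      simp only [Gm]
      exact ContinuousAt.comp (g := fun s : ℂ => Gp 1 s) (f := fun s : ℂ => -s)
        (hGpc (-c)) (by fun_prop)
    have h2 : Tendsto (fun s : ℂ => Gm 1 s) F (nhds (Gm 1 c)) :=
      hcont.tendsto.mono_left nhdsWithin_le_nhds
    rwa [show Gm 1 c = A from (Gm_eq_Gp l hl)] at h2
  -- Gamma limits
  have hlre : (0:ℝ) < (l:ℝ) := by exact_mod_cast hl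
  have hΓ1 : Tendsto (fun s : ℂ => Complex.Gamma (1 + 2 * s)) F
      (nhds (l.factorial : ℂ)) := by
    have heq1 : (1 : ℂ) + 2 * c = (l:ℂ) + 1 := by rw [hc]; ring
    have hd : DifferentiableAt ℂ Complex.Gamma (1 + 2 * c) := by
      apply Complex.differentiableAt_Gamma
      intro m h
      rw [heq1] at h
      have : ((l:ℂ) + 1).re = (-(m:ℂ)).re := by rw [h]
      simp only [Complex.add_re, Complex.natCast_re, Complex.one_re, Complex.neg_re] at this
      have h2 : (0:ℝ) ≤ (m:ℝ) := m.cast_nonneg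
      have h3 : (0:ℝ) ≤ (l:ℝ) := Nat.cast_nonneg _
      linarith
    have hca : ContinuousAt (fun s : ℂ => Complex.Gamma (1 + 2 * s)) c :=
      ContinuousAt.comp hd.continuousAt (by fun_prop)
    have h2 : Tendsto (fun s : ℂ => Complex.Gamma (1 + 2 * s)) F
        (nhds (Complex.Gamma (1 + 2 * c))) := hca.tendsto.mono_left nhdsWithin_le_nhds
    rwa [show Complex.Gamma (1 + 2 * c) = (l.factorial : ℂ) from ?_] at h2
    rw [heq1, Complex.Gamma_nat_eq_factorial]
  have hΓ2 : Tendsto (fun s : ℂ => Complex.Gamma (2 * s)) F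
      (nhds ((l-1).factorial : ℂ)) := by
    have h2c : 2 * c = ((l - 1 : ℕ) : ℂ) + 1 := by
      rw [hc]
      push_cast [Nat.cast_sub hl]
      ring
    have hd : DifferentiableAt ℂ Complex.Gamma (2 * c) := by
      apply Complex.differentiableAt_Gamma
      intro m h
      rw [h2c] at h
      have : (((l - 1 : ℕ) : ℂ) + 1).re = (-(m:ℂ)).re := by rw [h]
      simp only [Complex.add_re, Complex.natCast_re, Complex.one_re, Complex.neg_re] at this
      have h1 : (0:ℝ) ≤ ((l-1:ℕ):ℝ) := Nat.cast_nonneg _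
      have h2 : (0:ℝ) ≤ (m:ℝ) := m.cast_nonneg
      linarith
    have hca : ContinuousAt (fun s : ℂ => Complex.Gamma (2 * s)) c :=
      ContinuousAt.comp hd.continuousAt (by fun_prop)
    have h2 : Tendsto (fun s : ℂ => Complex.Gamma (2 * s)) F
        (nhds (Complex.Gamma (2 * c))) := hca.tendsto.mono_left nhdsWithin_le_nhds
    rwa [show Complex.Gamma (2 * c) = ((l-1).factorial : ℂ) from ?_] at h2
    rw [h2c, Complex.Gamma_nat_eq_factorial]
  -- the sine quotient
  have hshift : Tendsto (fun s : ℂ => s - c) F (nhdsWithin 0 {(0:ℂ)}ᶜ) := by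
    rw [tendsto_nhdsWithin_iff]
    constructor
    · have : Tendsto (fun s : ℂ => s - c) (nhds c) (nhds (c - c)) :=
        (continuous_sub_right c).tendsto c
      rw [sub_self] at this
      exact this.mono_left nhdsWithin_le_nhds
    · filter_upwards [self_mem_nhdsWithin] with s hs
      simp only [Set.mem_compl_iff, Set.mem_singleton_iff] at hs ⊢
      exact sub_ne_zero.mpr hs
  have hQ : Tendsto (fun s : ℂ => (s - c) / Complex.sin (2 * ↑Real.pi * s)) F
      (nhds ((-1:ℂ)^l * ((2:ℂ) * ↑Real.pi)⁻¹)) := by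
    have hg : Tendsto (fun h : ℂ => (h⁻¹ * Complex.sin (2 * ↑Real.pi * h))⁻¹)
        (nhdsWithin 0 {(0:ℂ)}ᶜ) (nhds (((2:ℂ) * ↑Real.pi)⁻¹)) :=
      tendsto_inv_mul_sin.inv₀ h2π
    have := ((hg.comp hshift).const_mul ((-1:ℂ)^l))
    apply this.congr
    intro s
    have hinv : ((-1:ℂ)^l)⁻¹ = (-1:ℂ)^l := by
      rw [← inv_pow]; norm_num
    simp only [Function.comp_apply]
    rw [sin_nat_shift l s, div_eq_mul_inv, mul_inv, mul_inv, inv_inv, hinv, hc]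
    ring
  -- the model function T
  have hden : A * (l.factorial : ℂ) * ((l-1).factorial : ℂ) ≠ 0 := by
    apply mul_ne_zero (mul_ne_zero hG _) _
    · exact_mod_cast Nat.factorial_ne_zero l
    · exact_mod_cast Nat.factorial_ne_zero (l-1)
  have hT : Tendsto (fun s : ℂ =>
      -Gm 1 s * (↑Real.pi * ((s - c) / Complex.sin (2 * ↑Real.pi * s))) /
        (Gp 1 s * Complex.Gamma (1 + 2 * s) * Complex.Gamma (2 * s))) F
      (nhds (-A * (↑Real.pi * ((-1:ℂ)^l * ((2:ℂ) * ↑Real.pi)⁻¹)) /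
        (A * (l.factorial : ℂ) * ((l-1).factorial : ℂ)))) := by
    exact Tendsto.div (Tendsto.mul hGm_t.neg (Tendsto.mul tendsto_const_nhds hQ))
      (Tendsto.mul (Tendsto.mul hGp_t hΓ1) hΓ2) hden
  -- identify the limit value
  have hval : -A * (↑Real.pi * ((-1:ℂ)^l * ((2:ℂ) * ↑Real.pi)⁻¹)) /
      (A * (l.factorial : ℂ) * ((l-1).factorial : ℂ)) =
      (-1 : ℂ) ^ (l + 1) / (2 * (l.factorial : ℂ) * ((l - 1).factorial : ℂ)) := by
    have hf1 : (l.factorial : ℂ) ≠ 0 := by exact_mod_cast Nat.factorial_ne_zero l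
    have hf2 : ((l-1).factorial : ℂ) ≠ 0 := by exact_mod_cast Nat.factorial_ne_zero (l-1)
    field_simp
    ring
  rw [← hval]
  -- eventual equality
  apply hT.congr'
  have hball : Metric.ball c (1/4) ∈ F :=
    nhdsWithin_le_nhds (Metric.ball_mem_nhds c (by norm_num))
  filter_upwards [self_mem_nhdsWithin, hball] with s hs hsb
  have hsne : s ≠ c := by simpa using hs
  have hdist : ‖s - c‖ < 1/4 := mem_ball_iff_norm.mp hsb
  have hcre : c.re = (l:ℝ)/2 := by
    rw [hc, show ((l:ℂ)/2) = (((l:ℝ)/2 : ℝ) : ℂ) from by push_cast; ring, Complex.ofReal_re]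
  have hsre : (1:ℝ)/4 ≤ s.re := by
    have h1 : |(s - c).re| ≤ ‖s - c‖ := Complex.abs_re_le_norm _
    have h2 : (s - c).re = s.re - c.re := by simp [Complex.sub_re]
    have h3 : (1:ℝ) ≤ (l:ℝ) := by exact_mod_cast hl
    rw [h2] at h1
    rw [hcre] at *
    cases abs_le.mp h1 with
    | intro hlow hhigh => linarith
  have hg2 : Complex.Gamma (2 * s) ≠ 0 := by
    apply Complex.Gamma_ne_zero_of_re_pos
    have : (2 * s).re = 2 * s.re := by simp [Complex.mul_re]
    rw [this]; linarith
  have hsin : Complex.sin (2 * ↑Real.pi * s) ≠ 0 := by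
    intro h0
    obtain ⟨k, hk⟩ := Complex.sin_eq_zero_iff.mp h0
    have h2s : s = (k : ℂ) / 2 := by
      have : (2 * s) * ↑Real.pi = (k:ℂ) * ↑Real.pi := by rw [← hk]; ring
      have h2 : (2:ℂ) * s = (k:ℂ) := mul_right_cancel₀ hπ this
      rw [← h2]; ring
    have hkl : k ≠ (l : ℤ) := by
      intro h
      apply hsne
      rw [h2s, h, hc]
      push_cast
      ring
    have habs : (1:ℝ) ≤ |((k - l : ℤ) : ℝ)| := by
      rw [← Int.cast_abs]
      exact_mod_cast Int.one_le_abs (sub_ne_zero.mpr hkl)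
    have hnorm : ‖s - c‖ = |((k - l : ℤ) : ℝ)| / 2 := by
      rw [h2s, hc, show (k:ℂ)/2 - (l:ℂ)/2 = (((k - l : ℤ) : ℝ) : ℂ) / 2 from by push_cast; ring,
        norm_div, Complex.norm_real]
      norm_num
    rw [hnorm] at hdist
    linarith
  have hΓeq : Complex.Gamma (1 - 2 * s) =
      ↑Real.pi / (Complex.sin (2 * ↑Real.pi * s) * Complex.Gamma (2 * s)) := by
    have h := Complex.Gamma_mul_Gamma_one_sub (2 * s)
    rw [show (↑Real.pi * (2 * s)) = 2 * ↑Real.pi * s from by ring] at h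
    rw [eq_div_iff (mul_ne_zero hsin hg2)]
    calc Complex.Gamma (1 - 2*s) * (Complex.sin (2 * ↑Real.pi * s) * Complex.Gamma (2*s))
        = (Complex.Gamma (2*s) * Complex.Gamma (1 - 2*s)) * Complex.sin (2 * ↑Real.pi * s) := by
          ring
      _ = (↑Real.pi / Complex.sin (2 * ↑Real.pi * s)) * Complex.sin (2 * ↑Real.pi * s) := by
          rw [h]
      _ = ↑Real.pi := div_mul_cancel₀ _ hsin
  rw [show Syu s = -Gm 1 s * Complex.Gamma (1 - 2 * s) /
      (Gp 1 s * Complex.Gamma (1 + 2 * s)) from rfl, hΓeq]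
  simp only [div_eq_mul_inv, mul_inv]
  ring

end YukawaAux
end

section
/- Let l ∈ ℕ and define w_l(x) = ∂_s[G_−(x,s) − G_+(x,s)]|_{s=l/2} for x > 0 (the s-derivative exists since s ↦ G_±(x,s) is entire for fixed x > 0). Then w_l is twice differentiable on (0,∞) and satisfies x²w_l''(x) + x w_l'(x) − (x + l²/4)·w_l(x) = 0 for all x > 0; i.e., w_l is a solution of the Yukawa equation at s = l/2. -/
/-- `w_l(x) = ∂_s[G_−(x,s) − G_+(x,s)]|_{s=l/2}`. -/
noncomputable def wl (l : ℕ) (x : ℝ) : ℂ :=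
  deriv (fun s : ℂ => Gm x s - Gp x s) ((l : ℂ) / 2)

open Complex Metric Finset

namespace YukawaAux

noncomputable def dbc (j : ℕ) (s : ℂ) : ℂ := deriv (fun s => bcoef s j) s

lemma bcoef_eq (s : ℂ) (j : ℕ) :
    bcoef s j = ((j.factorial : ℂ))⁻¹ * (Complex.Gamma (2 * s + (j : ℂ) + 1))⁻¹ :=
  mul_inv _ _

lemma bcoef_differentiable (j : ℕ) : Differentiable ℂ fun s => bcoef s j := by
  have h : Differentiable ℂ fun s : ℂ => (Complex.Gamma (2 * s + (j : ℂ) + 1))⁻¹ :=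
    Complex.differentiable_one_div_Gamma.comp (by fun_prop)
  simpa only [← bcoef_eq] using h.const_mul ((j.factorial : ℂ))⁻¹

lemma bcoef_hasDerivAt (j : ℕ) (s : ℂ) :
    HasDerivAt (fun s => bcoef s j) (dbc j s) s :=
  (bcoef_differentiable j s).hasDerivAt

lemma Gamma_inv_rec (w : ℂ) : w * (Complex.Gamma (w + 1))⁻¹ = (Complex.Gamma w)⁻¹ := by
  by_cases hw : w = 0
  · simp [hw, Complex.Gamma_zero]
  · rw [Complex.Gamma_add_one w hw, mul_inv, ← mul_assoc, mul_inv_cancel₀ hw, one_mul]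

lemma bcoef_rec (s : ℂ) (j : ℕ) :
    bcoef s j = ((j : ℂ) + 1) * (2 * s + (j : ℂ) + 1) * bcoef s (j + 1) := by
  rw [bcoef_eq, bcoef_eq]
  have h1 : (((j + 1).factorial : ℕ) : ℂ) = ((j : ℂ) + 1) * (j.factorial : ℂ) := by
    rw [Nat.factorial_succ]; push_cast; ring
  have h2 : 2 * s + ((j + 1 : ℕ) : ℂ) + 1 = (2 * s + (j : ℂ) + 1) + 1 := by push_cast; ring
  have hj : ((j : ℂ) + 1) ≠ 0 := Nat.cast_add_one_ne_zero j
  have hinv : ((j : ℂ) + 1) * ((j : ℂ) + 1)⁻¹ = 1 := mul_inv_cancel₀ hj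
  rw [h1, h2, ← Gamma_inv_rec (2 * s + (j : ℂ) + 1), mul_inv]
  linear_combination (-((2 * s + (j : ℂ) + 1) * ((j.factorial : ℂ))⁻¹ *
    (Complex.Gamma ((2 * s + (j : ℂ) + 1) + 1))⁻¹)) * hinv

lemma dbc_rec (j : ℕ) (s : ℂ) :
    dbc j s = ((j : ℂ) + 1) * ((2 * s + (j : ℂ) + 1) * dbc (j + 1) s + 2 * bcoef s (j + 1)) := by
  have ha : HasDerivAt (fun s : ℂ => ((j : ℂ) + 1) * (2 * s + (j : ℂ) + 1)) (((j : ℂ) + 1) * 2) s := by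
    have : HasDerivAt (fun s : ℂ => 2 * s + (j : ℂ) + 1) 2 s := by
      simpa [add_assoc] using (((hasDerivAt_id s).const_mul 2).add_const ((j : ℂ) + 1))
    simpa using this.const_mul ((j : ℂ) + 1)
  have h2 : HasDerivAt (fun s : ℂ => ((j : ℂ) + 1) * (2 * s + (j : ℂ) + 1) * bcoef s (j + 1))
      ((((j : ℂ) + 1) * 2) * bcoef s (j + 1) +
        ((j : ℂ) + 1) * (2 * s + (j : ℂ) + 1) * dbc (j + 1) s) s :=
    ha.mul (bcoef_hasDerivAt (j + 1) s)
  have hfun : (fun s => bcoef s j)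
      = fun s : ℂ => ((j : ℂ) + 1) * (2 * s + (j : ℂ) + 1) * bcoef s (j + 1) := by
    funext t; exact bcoef_rec t j
  have h3 : HasDerivAt (fun s => bcoef s j)
      ((((j : ℂ) + 1) * 2) * bcoef s (j + 1) +
        ((j : ℂ) + 1) * (2 * s + (j : ℂ) + 1) * dbc (j + 1) s) s := by
    rw [hfun]; exact h2
  rw [dbc, h3.deriv]; ring


lemma summable_CR (C r : ℝ) : Summable (fun j : ℕ => C * (r ^ j / j.factorial)) :=
  (Real.summable_pow_div_factorial r).mul_left C

lemma bcoef_bound (s₀ : ℂ) :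
    ∃ C : ℝ, 0 < C ∧ ∀ (j : ℕ), ∀ s ∈ closedBall s₀ 1, ‖bcoef s j‖ * j.factorial ≤ C := by
  set J : ℕ := ⌈2 * ‖s₀‖⌉₊ + 2 with hJ
  have hnorm : ∀ s ∈ closedBall s₀ 1, ‖s‖ ≤ ‖s₀‖ + 1 := by
    intro s hs
    have h := mem_closedBall_iff_norm.mp hs
    calc ‖s‖ = ‖s - s₀ + s₀‖ := by ring_nf
      _ ≤ ‖s - s₀‖ + ‖s₀‖ := norm_add_le _ _
      _ ≤ ‖s₀‖ + 1 := by linarith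
  have key : ∀ s ∈ closedBall s₀ 1, ∀ j : ℕ, J ≤ j → (1 : ℝ) ≤ ‖2 * s + (j : ℂ) + 1‖ := by
    intro s hs j hj
    have h1 : ‖s‖ ≤ ‖s₀‖ + 1 := hnorm s hs
    have h2 : ((j : ℝ) + 1) - 2 * ‖s‖ ≤ ‖2 * s + (j : ℂ) + 1‖ := by
      have hb : ‖((j : ℂ) + 1)‖ ≤ ‖2 * s + ((j : ℂ) + 1)‖ + ‖2 * s‖ := by
        calc ‖((j : ℂ) + 1)‖ = ‖2 * s + ((j : ℂ) + 1) - 2 * s‖ := by ring_nf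
          _ ≤ ‖2 * s + ((j : ℂ) + 1)‖ + ‖2 * s‖ := norm_sub_le _ _
      have hj1 : ‖((j : ℂ) + 1)‖ = (j : ℝ) + 1 := by
        have : ((j : ℂ) + 1) = ((j + 1 : ℕ) : ℂ) := by push_cast; ring
        rw [this, Complex.norm_natCast]; push_cast; ring
      have h2s : ‖(2 : ℂ) * s‖ = 2 * ‖s‖ := by
        rw [norm_mul]; norm_num
      have harr : 2 * s + (j : ℂ) + 1 = 2 * s + ((j : ℂ) + 1) := by ring
      rw [harr]
      linarith [hb, hj1.symm.le, h2s.le]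
    have h3 : 2 * ‖s₀‖ ≤ (⌈2 * ‖s₀‖⌉₊ : ℝ) := Nat.le_ceil _
    have h4 : (J : ℝ) ≤ (j : ℝ) := by exact_mod_cast hj
    have h5 : (J : ℝ) = (⌈2 * ‖s₀‖⌉₊ : ℝ) + 2 := by rw [hJ]; push_cast; ring
    linarith
  -- uniform bound on the first J+1 coefficients
  have hcont : ContinuousOn (fun s : ℂ => ∑ j ∈ Finset.range (J + 1), ‖bcoef s j‖ * (j.factorial : ℝ))
      (closedBall s₀ 1) := by
    apply Continuous.continuousOn
    apply continuous_finset_sum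
    intro j _
    exact ((bcoef_differentiable j).continuous.norm.mul continuous_const)
  obtain ⟨C₀, hC₀⟩ := (isCompact_closedBall s₀ 1).exists_bound_of_continuousOn hcont
  have hfin : ∀ j ≤ J, ∀ s ∈ closedBall s₀ 1, ‖bcoef s j‖ * j.factorial ≤ C₀ := by
    intro j hj s hs
    have hmem : j ∈ Finset.range (J + 1) := Finset.mem_range.mpr (Nat.lt_succ_of_le hj)
    have hle : ‖bcoef s j‖ * (j.factorial : ℝ) ≤
        ∑ i ∈ Finset.range (J + 1), ‖bcoef s i‖ * (i.factorial : ℝ) := by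
      apply Finset.single_le_sum (f := fun i => ‖bcoef s i‖ * (i.factorial : ℝ)) _ hmem
      intro i _
      positivity
    have := hC₀ s hs
    have habs : ∑ i ∈ Finset.range (J + 1), ‖bcoef s i‖ * (i.factorial : ℝ) ≤
        ‖∑ i ∈ Finset.range (J + 1), ‖bcoef s i‖ * (i.factorial : ℝ)‖ := le_abs_self _
    linarith
  have hind : ∀ s ∈ closedBall s₀ 1, ∀ j : ℕ, J ≤ j →
      ‖bcoef s j‖ * j.factorial ≤ ‖bcoef s J‖ * J.factorial := by
    intro s hs j hj
    induction j, hj using Nat.le_induction with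
    | base => exact le_refl _
    | succ n hn ih =>
      have hrec := bcoef_rec s n
      have hn1 : ‖bcoef s n‖ = ((n : ℝ) + 1) * ‖2 * s + (n : ℂ) + 1‖ * ‖bcoef s (n + 1)‖ := by
        rw [hrec, norm_mul, norm_mul]
        congr 1
        congr 1
        have : ((n : ℂ) + 1) = ((n + 1 : ℕ) : ℂ) := by push_cast; ring
        rw [this, Complex.norm_natCast]; push_cast; ring
      have hkey := key s hs n hn
      have hfact : ((n + 1).factorial : ℝ) = ((n : ℝ) + 1) * (n.factorial : ℝ) := by
        rw [Nat.factorial_succ]; push_cast; ring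
      have : ‖bcoef s (n + 1)‖ * ((n + 1).factorial : ℝ) ≤ ‖bcoef s n‖ * (n.factorial : ℝ) := by
        rw [hfact, hn1]
        have hpos : (0 : ℝ) ≤ ((n : ℝ) + 1) * ‖bcoef s (n + 1)‖ * (n.factorial : ℝ) := by positivity
        nlinarith [norm_nonneg (bcoef s (n + 1)), (Nat.cast_pos (α := ℝ)).mpr (Nat.factorial_pos n)]
      linarith
  refine ⟨max C₀ 1, lt_of_lt_of_le one_pos (le_max_right _ _), fun j s hs => ?_⟩
  rcases le_or_gt j J with h | h
  · exact le_trans (hfin j h s hs) (le_max_left _ _)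
  · have := hind s hs j h.le
    have h2 := hfin J le_rfl s hs
    exact le_trans (le_trans this h2) (le_max_left _ _)

lemma dbc_bound (s₀ : ℂ) :
    ∃ C : ℝ, 0 < C ∧ ∀ j : ℕ,
      ‖bcoef s₀ j‖ * j.factorial ≤ C ∧ ‖dbc j s₀‖ * j.factorial ≤ C := by
  obtain ⟨C, hC, h⟩ := bcoef_bound s₀
  refine ⟨C, hC, fun j => ⟨h j s₀ (mem_closedBall_self zero_le_one), ?_⟩⟩
  have hfac : (0 : ℝ) < (j.factorial : ℝ) := by exact_mod_cast Nat.factorial_pos j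
  have hd : deriv (fun s => bcoef s j) s₀ = Complex.cderiv 1 (fun s => bcoef s j) s₀ :=
    (Complex.cderiv_eq_deriv isOpen_univ (bcoef_differentiable j).differentiableOn one_pos
      (Set.subset_univ _)).symm
  have hb : ∀ w ∈ sphere s₀ 1, ‖bcoef w j‖ ≤ C / (j.factorial : ℝ) := by
    intro w hw
    have := h j w (sphere_subset_closedBall hw)
    rw [le_div_iff₀ hfac]
    linarith
  have := Complex.norm_cderiv_le one_pos hb
  rw [dbc, hd]
  calc ‖Complex.cderiv 1 (fun s => bcoef s j) s₀‖ * (j.factorial : ℝ)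
      ≤ (C / (j.factorial : ℝ) / 1) * (j.factorial : ℝ) := by
        apply mul_le_mul_of_nonneg_right this hfac.le
    _ = C := by field_simp


noncomputable def muM (l j : ℕ) : ℂ := (j : ℂ) - (l : ℂ) / 2
noncomputable def muP (l j : ℕ) : ℂ := (j : ℂ) + (l : ℂ) / 2

noncomputable def te (l j : ℕ) (p q u v : ℂ) (z : ℂ) : ℂ :=
  (p + q * z) * Complex.exp (muM l j * z) + (u + v * z) * Complex.exp (muP l j * z)

lemma te_hasDerivAt (l j : ℕ) (p q u v z : ℂ) :
    HasDerivAt (te l j p q u v)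
      (te l j (q + muM l j * p) (muM l j * q) (v + muP l j * u) (muP l j * v) z) z := by
  have hexp : ∀ μ : ℂ, HasDerivAt (fun z : ℂ => Complex.exp (μ * z)) (Complex.exp (μ * z) * μ) z := by
    intro μ
    have h1 : HasDerivAt (fun z : ℂ => μ * z) μ z := by
      simpa using (hasDerivAt_id z).const_mul μ
    exact h1.cexp
  have haff : ∀ p q : ℂ, HasDerivAt (fun z : ℂ => p + q * z) q z := by
    intro p q
    have h1 : HasDerivAt (fun z : ℂ => q * z) q z := by
      simpa using (hasDerivAt_id z).const_mul q
    simpa using h1.const_add p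
  have h1 := (haff p q).mul (hexp (muM l j))
  have h2 := (haff u v).mul (hexp (muP l j))
  have h := h1.add h2
  refine h.congr_deriv ?_
  unfold te
  ring

lemma te_differentiable (l j : ℕ) (p q u v : ℂ) : Differentiable ℂ (te l j p q u v) :=
  fun z => (te_hasDerivAt l j p q u v z).differentiableAt

noncomputable def cm1 (l j : ℕ) : ℂ := -(dbc j (-((l : ℂ) / 2)))
noncomputable def dm1 (l j : ℕ) : ℂ := -(bcoef (-((l : ℂ) / 2)) j)
noncomputable def cp1 (l j : ℕ) : ℂ := -(dbc j ((l : ℂ) / 2))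
noncomputable def dp1 (l j : ℕ) : ℂ := -(bcoef ((l : ℂ) / 2) j)

noncomputable def A0 (l j : ℕ) : ℂ → ℂ := te l j (cm1 l j) (dm1 l j) (cp1 l j) (dp1 l j)
noncomputable def A1 (l j : ℕ) : ℂ → ℂ :=
  te l j (dm1 l j + muM l j * cm1 l j) (muM l j * dm1 l j)
    (dp1 l j + muP l j * cp1 l j) (muP l j * dp1 l j)
noncomputable def A2 (l j : ℕ) : ℂ → ℂ :=
  te l j (muM l j * dm1 l j + muM l j * (dm1 l j + muM l j * cm1 l j))
    (muM l j * (muM l j * dm1 l j))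
    (muP l j * dp1 l j + muP l j * (dp1 l j + muP l j * cp1 l j))
    (muP l j * (muP l j * dp1 l j))

lemma A0_hasDerivAt (l j : ℕ) (z : ℂ) : HasDerivAt (A0 l j) (A1 l j z) z :=
  te_hasDerivAt l j _ _ _ _ z

lemma A1_hasDerivAt (l j : ℕ) (z : ℂ) : HasDerivAt (A1 l j) (A2 l j z) z :=
  te_hasDerivAt l j _ _ _ _ z

lemma coef_bound (l : ℕ) : ∃ K : ℝ, 0 < K ∧ ∀ j : ℕ,
    ‖cm1 l j‖ * j.factorial ≤ K ∧ ‖dm1 l j‖ * j.factorial ≤ K ∧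
    ‖cp1 l j‖ * j.factorial ≤ K ∧ ‖dp1 l j‖ * j.factorial ≤ K := by
  obtain ⟨C1, hC1, h1⟩ := dbc_bound (-((l : ℂ) / 2))
  obtain ⟨C2, hC2, h2⟩ := dbc_bound ((l : ℂ) / 2)
  refine ⟨max C1 C2, lt_max_of_lt_left hC1, fun j => ?_⟩
  have e1 := (h1 j).1
  have e2 := (h1 j).2
  have e3 := (h2 j).1
  have e4 := (h2 j).2
  refine ⟨?_, ?_, ?_, ?_⟩
  · rw [cm1, norm_neg]; exact le_trans e2 (le_max_left _ _)
  · rw [dm1, norm_neg]; exact le_trans e1 (le_max_left _ _)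
  · rw [cp1, norm_neg]; exact le_trans e4 (le_max_right _ _)
  · rw [dp1, norm_neg]; exact le_trans e3 (le_max_right _ _)

lemma norm_muM_le (l j : ℕ) : ‖muM l j‖ ≤ (j : ℝ) + l := by
  unfold muM
  apply (norm_sub_le _ _).trans
  have h1 : ‖((j : ℕ) : ℂ)‖ = (j : ℝ) := Complex.norm_natCast j
  have h2 : ‖((l : ℕ) : ℂ) / 2‖ = (l : ℝ) / 2 := by
    rw [norm_div, Complex.norm_natCast]
    norm_num
  rw [h1, h2]
  have : (0:ℝ) ≤ l := Nat.cast_nonneg l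
  linarith

lemma norm_muP_le (l j : ℕ) : ‖muP l j‖ ≤ (j : ℝ) + l := by
  unfold muP
  apply (norm_add_le _ _).trans
  have h1 : ‖((j : ℕ) : ℂ)‖ = (j : ℝ) := Complex.norm_natCast j
  have h2 : ‖((l : ℕ) : ℂ) / 2‖ = (l : ℝ) / 2 := by
    rw [norm_div, Complex.norm_natCast]
    norm_num
  rw [h1, h2]
  have : (0:ℝ) ≤ l := Nat.cast_nonneg l
  linarith

lemma norm_exp_le (μ z : ℂ) (B R : ℝ) (hμ : ‖μ‖ ≤ B) (hz : ‖z‖ ≤ R) (hR : 0 ≤ R) :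
    ‖Complex.exp (μ * z)‖ ≤ Real.exp (B * R) := by
  rw [Complex.norm_exp]
  apply Real.exp_le_exp.mpr
  calc (μ * z).re ≤ ‖μ * z‖ := Complex.re_le_norm _
    _ = ‖μ‖ * ‖z‖ := norm_mul _ _
    _ ≤ B * R := mul_le_mul hμ hz (norm_nonneg _) (le_trans (norm_nonneg _) hμ)

lemma norm_te_le (l j : ℕ) (p q u v z : ℂ) (M R : ℝ) (hM : 0 ≤ M) (hR : 0 ≤ R)
    (hp : ‖p‖ ≤ M) (hq : ‖q‖ ≤ M) (hu : ‖u‖ ≤ M) (hv : ‖v‖ ≤ M) (hz : ‖z‖ ≤ R) :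
    ‖te l j p q u v z‖ ≤ 2 * (M * (1 + R)) * Real.exp (((j : ℝ) + l) * R) := by
  have hzn : (0:ℝ) ≤ ‖z‖ := norm_nonneg z
  have hterm : ∀ a b : ℂ, ‖a‖ ≤ M → ‖b‖ ≤ M → ∀ μ : ℂ, ‖μ‖ ≤ (j : ℝ) + l →
      ‖(a + b * z) * Complex.exp (μ * z)‖ ≤ (M * (1 + R)) * Real.exp (((j : ℝ) + l) * R) := by
    intro a b ha hb μ hμ
    rw [norm_mul]
    apply mul_le_mul _ (norm_exp_le μ z _ R hμ hz hR) (norm_nonneg _) (by positivity)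
    calc ‖a + b * z‖ ≤ ‖a‖ + ‖b‖ * ‖z‖ := (norm_add_le _ _).trans (by rw [norm_mul])
      _ ≤ M + M * R := by nlinarith
      _ = M * (1 + R) := by ring
  calc ‖te l j p q u v z‖ ≤ ‖(p + q * z) * Complex.exp (muM l j * z)‖ +
        ‖(u + v * z) * Complex.exp (muP l j * z)‖ := norm_add_le _ _
    _ ≤ (M * (1 + R)) * Real.exp (((j : ℝ) + l) * R) +
        (M * (1 + R)) * Real.exp (((j : ℝ) + l) * R) := by
      gcongr ?_ + ?_
      · exact hterm p q hp hq _ (norm_muM_le l j)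
      · exact hterm u v hu hv _ (norm_muP_le l j)
    _ = 2 * (M * (1 + R)) * Real.exp (((j : ℝ) + l) * R) := by ring


set_option maxHeartbeats 1600000 in
lemma A_bound (l : ℕ) (R : ℝ) (hR : 0 ≤ R) : ∃ C : ℝ, 0 < C ∧ ∀ j : ℕ, ∀ w : ℂ, ‖w‖ ≤ R →
    ‖A0 l j w‖ ≤ C * ((4 * Real.exp R) ^ j / j.factorial) ∧
    ‖A1 l j w‖ ≤ C * ((4 * Real.exp R) ^ j / j.factorial) ∧
    ‖A2 l j w‖ ≤ C * ((4 * Real.exp R) ^ j / j.factorial) ∧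
    ‖dm1 l j * Complex.exp (muM l j * w)‖ ≤ C * ((4 * Real.exp R) ^ j / j.factorial) ∧
    ‖dp1 l j * Complex.exp (muP l j * w)‖ ≤ C * ((4 * Real.exp R) ^ j / j.factorial) := by
  obtain ⟨K, hK, hcoef⟩ := coef_bound l
  refine ⟨2 * K * (1 + R) * (1 + (l : ℝ)) ^ 2 * Real.exp ((l : ℝ) * R), by positivity,
    fun j w hw => ?_⟩
  have hfac : (0 : ℝ) < (j.factorial : ℝ) := by exact_mod_cast j.factorial_pos
  have hKj : ∀ a : ℂ, ‖a‖ * (j.factorial : ℝ) ≤ K → ‖a‖ ≤ K / (j.factorial : ℝ) := by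
    intro a ha
    rw [le_div_iff₀ hfac]; exact ha
  obtain ⟨h1, h2, h3, h4⟩ := hcoef j
  have hb1 := hKj _ h1
  have hb2 := hKj _ h2
  have hb3 := hKj _ h3
  have hb4 := hKj _ h4
  have hKf : (0:ℝ) ≤ K / j.factorial := by positivity
  have hj0 : (0:ℝ) ≤ (j:ℝ) := Nat.cast_nonneg j
  have hl0 : (0:ℝ) ≤ (l:ℝ) := Nat.cast_nonneg l
  set x : ℝ := 1 + (j:ℝ) + l with hx
  set M : ℝ := x ^ 2 * (K / j.factorial) with hM
  have hx1 : (1:ℝ) ≤ x := by rw [hx]; linarith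
  have hjl0 : (0:ℝ) ≤ (j:ℝ) + l := by linarith
  have hMpos : 0 ≤ M := by rw [hM]; positivity
  have hfactor : ∀ t : ℝ, t ≤ x ^ 2 → t * (K / j.factorial) ≤ M := by
    intro t ht
    rw [hM]
    exact mul_le_mul_of_nonneg_right ht hKf
  have hxx : x ≤ x ^ 2 := by nlinarith
  have h1x : (1:ℝ) ≤ x ^ 2 := by nlinarith
  have hyx : (j:ℝ) + l ≤ x ^ 2 := by rw [hx]; nlinarith
  have hyyx : ((j:ℝ) + l) * ((j:ℝ) + l) ≤ x ^ 2 := by rw [hx]; nlinarith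
  have hsumx : ((j:ℝ) + l) * (1 + x) ≤ x ^ 2 := by rw [hx]; nlinarith
  have hKM : K / j.factorial ≤ 2 * (M * (1 + R)) := by
    have h5 : (1:ℝ) * (K / j.factorial) ≤ M := hfactor 1 h1x
    have h6 : M * 1 ≤ M * (2 * (1 + R)) :=
      mul_le_mul_of_nonneg_left (by linarith) hMpos
    nlinarith [h5, h6]
  have hmuM := norm_muM_le l j
  have hmuP := norm_muP_le l j
  have hmul : ∀ (μ a : ℂ), ‖μ‖ ≤ (j:ℝ) + l → ‖a‖ ≤ K / j.factorial →
      ‖μ * a‖ ≤ ((j:ℝ) + l) * (K / j.factorial) := by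
    intro μ a hμ ha
    rw [norm_mul]
    exact mul_le_mul hμ ha (norm_nonneg _) hjl0
  -- single coefficients are ≤ M
  have hMc : ∀ a : ℂ, ‖a‖ ≤ K / j.factorial → ‖a‖ ≤ M := by
    intro a ha
    refine le_trans ha ?_
    have : (1:ℝ) * (K / j.factorial) ≤ M := hfactor 1 h1x
    linarith [this]
  -- sums like d + mu*c
  have hsum1 : ∀ (μ a b : ℂ), ‖μ‖ ≤ (j:ℝ) + l → ‖a‖ ≤ K / j.factorial →
      ‖b‖ ≤ K / j.factorial → ‖b + μ * a‖ ≤ x * (K / j.factorial) := by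
    intro μ a b hμ ha hb
    calc ‖b + μ * a‖ ≤ ‖b‖ + ‖μ * a‖ := norm_add_le _ _
      _ ≤ K / j.factorial + ((j:ℝ) + l) * (K / j.factorial) :=
          add_le_add hb (hmul μ a hμ ha)
      _ = x * (K / j.factorial) := by rw [hx]; ring
  -- final comparison of the `te` bound with the target bound
  have hfinal : 2 * (M * (1 + R)) * Real.exp (((j : ℝ) + l) * R) ≤
      2 * K * (1 + R) * (1 + (l : ℝ)) ^ 2 * Real.exp ((l : ℝ) * R) *
        ((4 * Real.exp R) ^ j / j.factorial) := by
    have hexp : Real.exp (((j:ℝ) + l) * R) = (Real.exp R) ^ j * Real.exp ((l:ℝ) * R) := by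
      rw [← Real.exp_nat_mul, ← Real.exp_add]; ring_nf
    have hj2 : (j : ℝ) + 1 ≤ 2 ^ j := by
      have h := Nat.lt_two_pow_self (n := j)
      have h' : ((j + 1 : ℕ) : ℝ) ≤ ((2 ^ j : ℕ) : ℝ) := by exact_mod_cast h
      push_cast at h'
      linarith
    have h2p : x ≤ (1 + (l:ℝ)) * 2 ^ j := by
      have h2pos : (0:ℝ) ≤ (2:ℝ) ^ j := by positivity
      rw [hx]
      nlinarith
    have h4j : (((2:ℝ) ^ j) : ℝ) ^ 2 = 4 ^ j := by
      rw [← pow_mul, mul_comm, pow_mul]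
      norm_num
    have key : x ^ 2 * (Real.exp R) ^ j ≤ (1 + (l:ℝ)) ^ 2 * (4 * Real.exp R) ^ j := by
      have hsq : x ^ 2 ≤ ((1 + (l:ℝ)) * 2 ^ j) ^ 2 :=
        pow_le_pow_left₀ (by rw [hx]; linarith) h2p 2
      calc x ^ 2 * (Real.exp R) ^ j
          ≤ ((1 + (l:ℝ)) * 2 ^ j) ^ 2 * (Real.exp R) ^ j :=
            mul_le_mul_of_nonneg_right hsq (by positivity)
        _ = (1 + (l:ℝ)) ^ 2 * (4 * Real.exp R) ^ j := by
            rw [mul_pow, h4j, mul_pow]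
            ring
    calc 2 * (M * (1 + R)) * Real.exp (((j : ℝ) + l) * R)
        = (2 * K * (1 + R) * Real.exp ((l:ℝ) * R) / j.factorial) *
          (x ^ 2 * (Real.exp R) ^ j) := by rw [hM, hexp]; ring
      _ ≤ (2 * K * (1 + R) * Real.exp ((l:ℝ) * R) / j.factorial) *
          ((1 + (l:ℝ)) ^ 2 * (4 * Real.exp R) ^ j) :=
            mul_le_mul_of_nonneg_left key (by positivity)
      _ = 2 * K * (1 + R) * (1 + (l : ℝ)) ^ 2 * Real.exp ((l : ℝ) * R) *
          ((4 * Real.exp R) ^ j / j.factorial) := by ring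
  have hte : ∀ p q u v : ℂ, ‖p‖ ≤ M → ‖q‖ ≤ M → ‖u‖ ≤ M → ‖v‖ ≤ M →
      ‖te l j p q u v w‖ ≤ 2 * K * (1 + R) * (1 + (l : ℝ)) ^ 2 * Real.exp ((l : ℝ) * R) *
        ((4 * Real.exp R) ^ j / j.factorial) := by
    intro p q u v hp hq hu hv
    exact le_trans (norm_te_le l j p q u v w M R hMpos hR hp hq hu hv hw) hfinal
  have hA1cm : ‖dm1 l j + muM l j * cm1 l j‖ ≤ x * (K / j.factorial) :=
    hsum1 _ _ _ hmuM hb1 hb2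
  have hA1cp : ‖dp1 l j + muP l j * cp1 l j‖ ≤ x * (K / j.factorial) :=
    hsum1 _ _ _ hmuP hb3 hb4
  refine ⟨?_, ?_, ?_, ?_, ?_⟩
  · exact hte _ _ _ _ (hMc _ hb1) (hMc _ hb2) (hMc _ hb3) (hMc _ hb4)
  · refine hte _ _ _ _ ?_ ?_ ?_ ?_
    · exact le_trans hA1cm (hfactor x hxx)
    · exact le_trans (hmul _ _ hmuM hb2) (hfactor _ hyx)
    · exact le_trans hA1cp (hfactor x hxx)
    · exact le_trans (hmul _ _ hmuP hb4) (hfactor _ hyx)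
  · refine hte _ _ _ _ ?_ ?_ ?_ ?_
    · calc ‖muM l j * dm1 l j + muM l j * (dm1 l j + muM l j * cm1 l j)‖
          ≤ ‖muM l j * dm1 l j‖ + ‖muM l j * (dm1 l j + muM l j * cm1 l j)‖ := norm_add_le _ _
        _ ≤ ((j:ℝ) + l) * (K / j.factorial) + ((j:ℝ) + l) * (x * (K / j.factorial)) := by
            refine add_le_add (hmul _ _ hmuM hb2) ?_
            rw [norm_mul]
            exact mul_le_mul hmuM hA1cm (norm_nonneg _) hjl0
        _ = (((j:ℝ) + l) * (1 + x)) * (K / j.factorial) := by ring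
        _ ≤ M := hfactor _ hsumx
    · rw [norm_mul]
      calc ‖muM l j‖ * ‖muM l j * dm1 l j‖
          ≤ ((j:ℝ) + l) * (((j:ℝ) + l) * (K / j.factorial)) :=
            mul_le_mul hmuM (hmul _ _ hmuM hb2) (norm_nonneg _) hjl0
        _ = (((j:ℝ) + l) * ((j:ℝ) + l)) * (K / j.factorial) := by ring
        _ ≤ M := hfactor _ hyyx
    · calc ‖muP l j * dp1 l j + muP l j * (dp1 l j + muP l j * cp1 l j)‖
          ≤ ‖muP l j * dp1 l j‖ + ‖muP l j * (dp1 l j + muP l j * cp1 l j)‖ := norm_add_le _ _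
        _ ≤ ((j:ℝ) + l) * (K / j.factorial) + ((j:ℝ) + l) * (x * (K / j.factorial)) := by
            refine add_le_add (hmul _ _ hmuP hb4) ?_
            rw [norm_mul]
            exact mul_le_mul hmuP hA1cp (norm_nonneg _) hjl0
        _ = (((j:ℝ) + l) * (1 + x)) * (K / j.factorial) := by ring
        _ ≤ M := hfactor _ hsumx
    · rw [norm_mul]
      calc ‖muP l j‖ * ‖muP l j * dp1 l j‖
          ≤ ((j:ℝ) + l) * (((j:ℝ) + l) * (K / j.factorial)) :=
            mul_le_mul hmuP (hmul _ _ hmuP hb4) (norm_nonneg _) hjl0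
        _ = (((j:ℝ) + l) * ((j:ℝ) + l)) * (K / j.factorial) := by ring
        _ ≤ M := hfactor _ hyyx
  · rw [norm_mul]
    calc ‖dm1 l j‖ * ‖Complex.exp (muM l j * w)‖
        ≤ (K / j.factorial) * Real.exp (((j:ℝ) + l) * R) :=
          mul_le_mul hb2 (norm_exp_le _ _ _ R hmuM hw hR) (norm_nonneg _) hKf
      _ ≤ 2 * (M * (1 + R)) * Real.exp (((j:ℝ) + l) * R) :=
          mul_le_mul_of_nonneg_right hKM (Real.exp_nonneg _)
      _ ≤ _ := hfinal
  · rw [norm_mul]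
    calc ‖dp1 l j‖ * ‖Complex.exp (muP l j * w)‖
        ≤ (K / j.factorial) * Real.exp (((j:ℝ) + l) * R) :=
          mul_le_mul hb4 (norm_exp_le _ _ _ R hmuP hw hR) (norm_nonneg _) hKf
      _ ≤ 2 * (M * (1 + R)) * Real.exp (((j:ℝ) + l) * R) :=
          mul_le_mul_of_nonneg_right hKM (Real.exp_nonneg _)
      _ ≤ _ := hfinal


lemma hasDerivAt_tsum_of_bound {F : ℕ → ℂ → ℂ} (hF : ∀ j, Differentiable ℂ (F j))
    {c : ℂ} {R : ℝ} {u : ℕ → ℝ} (hu : Summable u)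
    (hb : ∀ (j : ℕ), ∀ w ∈ ball c R, ‖F j w‖ ≤ u j) {z : ℂ} (hz : z ∈ ball c R) :
    HasDerivAt (fun w => ∑' j, F j w) (∑' j, deriv (F j) z) z := by
  have hdiff := Complex.differentiableOn_tsum_of_summable_norm hu
    (fun j => (hF j).differentiableOn) isOpen_ball hb
  have h1 : DifferentiableAt ℂ (fun w => ∑' j, F j w) z :=
    hdiff.differentiableAt (isOpen_ball.mem_nhds hz)
  have h2 := (Complex.hasSum_deriv_of_summable_norm hu
    (fun j => (hF j).differentiableOn) isOpen_ball hb hz).tsum_eq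
  rw [h2]
  exact h1.hasDerivAt

noncomputable def Wf (l : ℕ) : ℂ → ℂ := fun z => ∑' j, A0 l j z
noncomputable def W1 (l : ℕ) : ℂ → ℂ := fun z => ∑' j, A1 l j z
noncomputable def W2 (l : ℕ) : ℂ → ℂ := fun z => ∑' j, A2 l j z

lemma Wf_hasDerivAt (l : ℕ) (z : ℂ) : HasDerivAt (Wf l) (W1 l z) z := by
  obtain ⟨C, hC, hb⟩ := A_bound l (‖z‖ + 1) (by positivity)
  have hz : z ∈ ball (0 : ℂ) (‖z‖ + 1) := by
    rw [mem_ball, dist_zero_right]; linarith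
  have h := hasDerivAt_tsum_of_bound (F := A0 l)
    (fun j => fun w => (A0_hasDerivAt l j w).differentiableAt)
    (summable_CR C (4 * Real.exp (‖z‖ + 1)))
    (fun j w hw => (hb j w (by rw [mem_ball, dist_zero_right] at hw; linarith)).1) hz
  have heq : (∑' j, deriv (A0 l j) z) = W1 l z := by
    rw [W1]
    exact tsum_congr fun j => (A0_hasDerivAt l j z).deriv
  rw [heq] at h
  exact h

lemma W1_hasDerivAt (l : ℕ) (z : ℂ) : HasDerivAt (W1 l) (W2 l z) z := by
  obtain ⟨C, hC, hb⟩ := A_bound l (‖z‖ + 1) (by positivity)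
  have hz : z ∈ ball (0 : ℂ) (‖z‖ + 1) := by
    rw [mem_ball, dist_zero_right]; linarith
  have h := hasDerivAt_tsum_of_bound (F := A1 l)
    (fun j => fun w => (A1_hasDerivAt l j w).differentiableAt)
    (summable_CR C (4 * Real.exp (‖z‖ + 1)))
    (fun j w hw => (hb j w (by rw [mem_ball, dist_zero_right] at hw; linarith)).2.1) hz
  have heq : (∑' j, deriv (A1 l j) z) = W2 l z := by
    rw [W2]
    exact tsum_congr fun j => (A1_hasDerivAt l j z).deriv
  rw [heq] at h
  exact h

lemma summable_of_bound {f : ℕ → ℂ} {C r : ℝ} (h : ∀ j, ‖f j‖ ≤ C * (r ^ j / j.factorial)) :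
    Summable f :=
  Summable.of_norm_bounded (summable_CR C r) h

lemma summable_A0 (l : ℕ) (z : ℂ) : Summable (fun j => A0 l j z) := by
  obtain ⟨C, hC, hb⟩ := A_bound l ‖z‖ (norm_nonneg z)
  exact summable_of_bound fun j => (hb j z le_rfl).1

lemma summable_A2 (l : ℕ) (z : ℂ) : Summable (fun j => A2 l j z) := by
  obtain ⟨C, hC, hb⟩ := A_bound l ‖z‖ (norm_nonneg z)
  exact summable_of_bound fun j => (hb j z le_rfl).2.2.1

lemma summable_resM (l : ℕ) (z : ℂ) :
    Summable (fun j => dm1 l j * Complex.exp (muM l j * z)) := by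
  obtain ⟨C, hC, hb⟩ := A_bound l ‖z‖ (norm_nonneg z)
  exact summable_of_bound fun j => (hb j z le_rfl).2.2.2.1

lemma summable_resP (l : ℕ) (z : ℂ) :
    Summable (fun j => dp1 l j * Complex.exp (muP l j * z)) := by
  obtain ⟨C, hC, hb⟩ := A_bound l ‖z‖ (norm_nonneg z)
  exact summable_of_bound fun j => (hb j z le_rfl).2.2.2.2


-- recurrences for the coefficients at s = ±l/2
lemma rec_dm1 (l j : ℕ) : dm1 l j = ((j:ℂ) + 1) * ((j:ℂ) + 1 - l) * dm1 l (j+1) := by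
  have h := bcoef_rec (-((l:ℂ)/2)) j
  have harg : 2 * (-((l:ℂ)/2)) + (j:ℂ) + 1 = (j:ℂ) + 1 - l := by ring
  rw [harg] at h
  rw [dm1, dm1, h]
  ring

lemma rec_dp1 (l j : ℕ) : dp1 l j = ((j:ℂ) + 1) * ((j:ℂ) + 1 + l) * dp1 l (j+1) := by
  have h := bcoef_rec ((l:ℂ)/2) j
  have harg : 2 * ((l:ℂ)/2) + (j:ℂ) + 1 = (j:ℂ) + 1 + l := by ring
  rw [harg] at h
  rw [dp1, dp1, h]
  ring

lemma rec_cm1 (l j : ℕ) :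
    cm1 l j = ((j:ℂ) + 1) * (((j:ℂ) + 1 - l) * cm1 l (j+1) + 2 * dm1 l (j+1)) := by
  have h := dbc_rec j (-((l:ℂ)/2))
  have harg : 2 * (-((l:ℂ)/2)) + (j:ℂ) + 1 = (j:ℂ) + 1 - l := by ring
  rw [harg] at h
  rw [cm1, cm1, dm1, h]
  ring

lemma rec_cp1 (l j : ℕ) :
    cp1 l j = ((j:ℂ) + 1) * (((j:ℂ) + 1 + l) * cp1 l (j+1) + 2 * dp1 l (j+1)) := by
  have h := dbc_rec j ((l:ℂ)/2)
  have harg : 2 * ((l:ℂ)/2) + (j:ℂ) + 1 = (j:ℂ) + 1 + l := by ring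
  rw [harg] at h
  rw [cp1, cp1, dp1, h]
  ring

set_option maxHeartbeats 1600000 in
lemma A2_succ (l j : ℕ) (z : ℂ) :
    A2 l (j+1) z = (((l:ℂ)/2)^2 * A0 l (j+1) z + Complex.exp z * A0 l j z) +
      ((l:ℂ) * (dp1 l (j+1) * Complex.exp (muP l (j+1) * z)) -
       (l:ℂ) * (dm1 l (j+1) * Complex.exp (muM l (j+1) * z))) := by
  have hm : Complex.exp (muM l j * z) =
      Complex.exp (muM l (j+1) * z) * (Complex.exp z)⁻¹ := by
    rw [eq_mul_inv_iff_mul_eq₀ (Complex.exp_ne_zero z), ← Complex.exp_add]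
    congr 1
    simp only [muM]
    push_cast
    ring
  have hp : Complex.exp (muP l j * z) =
      Complex.exp (muP l (j+1) * z) * (Complex.exp z)⁻¹ := by
    rw [eq_mul_inv_iff_mul_eq₀ (Complex.exp_ne_zero z), ← Complex.exp_add]
    congr 1
    simp only [muP]
    push_cast
    ring
  have hmu : muM l (j+1) = (j:ℂ) + 1 - (l:ℂ)/2 := by
    simp only [muM]; push_cast; ring
  have hpu : muP l (j+1) = (j:ℂ) + 1 + (l:ℂ)/2 := by
    simp only [muP]; push_cast; ring
  simp only [A2, A0, te]
  rw [hm, hp, rec_dm1 l j, rec_dp1 l j, rec_cm1 l j, rec_cp1 l j, hmu, hpu]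
  have hez := Complex.exp_ne_zero z
  field_simp
  ring

lemma A2_zero (l : ℕ) (z : ℂ) :
    A2 l 0 z = ((l:ℂ)/2)^2 * A0 l 0 z +
      ((l:ℂ) * (dp1 l 0 * Complex.exp (muP l 0 * z)) -
       (l:ℂ) * (dm1 l 0 * Complex.exp (muM l 0 * z))) := by
  have hmu : muM l 0 = -((l:ℂ)/2) := by simp [muM]
  have hpu : muP l 0 = (l:ℂ)/2 := by simp [muP]
  simp only [A2, A0, te]
  rw [hmu, hpu]
  ring

lemma shift_sum (l : ℕ) (z : ℂ) :
    ∑' j, dm1 l j * Complex.exp (muM l j * z) =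
    ∑' j, dp1 l j * Complex.exp (muP l j * z) := by
  have hsum := summable_resM l z
  have hzero : ∀ j ∈ Finset.range l, dm1 l j * Complex.exp (muM l j * z) = 0 := by
    intro j hj
    have hjl : j < l := Finset.mem_range.mp hj
    have hble : j + 1 ≤ l := hjl
    have hb : bcoef (-((l:ℂ)/2)) j = 0 := by
      rw [bcoef_eq]
      have harg : 2 * (-((l:ℂ)/2)) + (j:ℂ) + 1 = -(((l - (j+1) : ℕ)):ℂ) := by
        rw [Nat.cast_sub hble]
        push_cast
        ring
      rw [harg, Complex.Gamma_neg_nat_eq_zero, inv_zero, mul_zero]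
    rw [dm1, hb, neg_zero, zero_mul]
  have hterm : ∀ k : ℕ, dm1 l (k + l) * Complex.exp (muM l (k + l) * z)
      = dp1 l k * Complex.exp (muP l k * z) := by
    intro k
    have hb : bcoef (-((l:ℂ)/2)) (k + l) = bcoef ((l:ℂ)/2) k := by
      rw [bcoef_eq, bcoef_eq]
      have h1 : 2 * (-((l:ℂ)/2)) + ((k + l : ℕ):ℂ) + 1 = ((k:ℕ):ℂ) + 1 := by push_cast; ring
      have h2 : 2 * ((l:ℂ)/2) + (k:ℂ) + 1 = ((l + k : ℕ):ℂ) + 1 := by push_cast; ring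
      rw [h1, h2, Complex.Gamma_nat_eq_factorial, Complex.Gamma_nat_eq_factorial]
      rw [add_comm k l]
      push_cast
      ring
    have hmu : muM l (k + l) = muP l k := by
      simp only [muM, muP]; push_cast; ring
    rw [dm1, dp1, hb, hmu]
  rw [← Summable.sum_add_tsum_nat_add l hsum, Finset.sum_eq_zero hzero, zero_add]
  exact tsum_congr hterm

set_option maxHeartbeats 1600000 in
lemma W2_eq (l : ℕ) (z : ℂ) :
    W2 l z = (Complex.exp z + ((l:ℂ)/2)^2) * Wf l z := by
  have S0 := summable_A0 l z
  have S2 := summable_A2 l z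
  have SM := summable_resM l z
  have SP := summable_resP l z
  have S0s : Summable (fun j => A0 l (j+1) z) := (summable_nat_add_iff 1).mpr S0
  have SMs : Summable (fun j => dm1 l (j+1) * Complex.exp (muM l (j+1) * z)) :=
    (summable_nat_add_iff 1).mpr SM
  have SPs : Summable (fun j => dp1 l (j+1) * Complex.exp (muP l (j+1) * z)) :=
    (summable_nat_add_iff 1).mpr SP
  have h2 : W2 l z = A2 l 0 z + ∑' j, A2 l (j+1) z := Summable.tsum_eq_zero_add S2
  have hW : (∑' j, A0 l j z) = Wf l z := rfl
  have hS : ∑' j, A0 l (j+1) z = Wf l z - A0 l 0 z := by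
    have := Summable.tsum_eq_zero_add S0
    rw [← hW, this]
    ring
  have hF : (∑' j, dm1 l j * Complex.exp (muM l j * z)) =
      dm1 l 0 * Complex.exp (muM l 0 * z) +
      ∑' j, dm1 l (j+1) * Complex.exp (muM l (j+1) * z) := Summable.tsum_eq_zero_add SM
  have hG : (∑' j, dp1 l j * Complex.exp (muP l j * z)) =
      dp1 l 0 * Complex.exp (muP l 0 * z) +
      ∑' j, dp1 l (j+1) * Complex.exp (muP l (j+1) * z) := Summable.tsum_eq_zero_add SP
  have hSh := shift_sum l z
  have hsplit : ∑' j, A2 l (j+1) z =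
      (((l:ℂ)/2)^2 * ∑' j, A0 l (j+1) z + Complex.exp z * ∑' j, A0 l j z) +
      ((l:ℂ) * ∑' j, dp1 l (j+1) * Complex.exp (muP l (j+1) * z) -
       (l:ℂ) * ∑' j, dm1 l (j+1) * Complex.exp (muM l (j+1) * z)) := by
    rw [tsum_congr (fun j => A2_succ l j z)]
    rw [Summable.tsum_add ((S0s.mul_left _).add (S0.mul_left _)) ((SPs.mul_left _).sub (SMs.mul_left _))]
    rw [Summable.tsum_add (S0s.mul_left _) (S0.mul_left _)]
    rw [Summable.tsum_sub (SPs.mul_left _) (SMs.mul_left _)]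
    rw [tsum_mul_left, tsum_mul_left, tsum_mul_left, tsum_mul_left]
  rw [h2, hsplit, A2_zero l z, hS, hW]
  linear_combination ((l:ℂ)) * hF - ((l:ℂ)) * hG - ((l:ℂ)) * hSh


noncomputable def Tf (z : ℂ) (j : ℕ) (s : ℂ) : ℂ :=
  bcoef (-s) j * Complex.exp ((-s + (j:ℂ)) * z) - bcoef s j * Complex.exp ((s + (j:ℂ)) * z)

lemma summable_term (s z : ℂ) :
    Summable (fun j : ℕ => bcoef s j * Complex.exp ((s + (j:ℂ)) * z)) := by
  obtain ⟨C, hC, hb⟩ := bcoef_bound s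
  apply summable_of_bound (C := C * Real.exp (‖s‖ * ‖z‖)) (r := Real.exp ‖z‖)
  intro j
  have hfac : (0 : ℝ) < (j.factorial : ℝ) := by exact_mod_cast j.factorial_pos
  have hbc : ‖bcoef s j‖ ≤ C / j.factorial := by
    rw [le_div_iff₀ hfac]
    exact hb j s (mem_closedBall_self zero_le_one)
  have hmu : ‖s + (j:ℂ)‖ ≤ ‖s‖ + j := by
    apply (norm_add_le _ _).trans
    rw [Complex.norm_natCast]
  have hexp : ‖Complex.exp ((s + (j:ℂ)) * z)‖ ≤ Real.exp ((‖s‖ + j) * ‖z‖) :=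
    norm_exp_le _ _ _ _ hmu le_rfl (norm_nonneg z)
  calc ‖bcoef s j * Complex.exp ((s + (j:ℂ)) * z)‖
      = ‖bcoef s j‖ * ‖Complex.exp ((s + (j:ℂ)) * z)‖ := norm_mul _ _
    _ ≤ (C / j.factorial) * Real.exp ((‖s‖ + j) * ‖z‖) :=
        mul_le_mul hbc hexp (norm_nonneg _) (by positivity)
    _ = C * Real.exp (‖s‖ * ‖z‖) * ((Real.exp ‖z‖) ^ j / j.factorial) := by
        rw [show (‖s‖ + (j:ℝ)) * ‖z‖ = ‖s‖ * ‖z‖ + (j:ℝ) * ‖z‖ from by ring,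
          Real.exp_add, ← Real.exp_nat_mul]
        ring

lemma Gp_eq (x : ℝ) (hx : 0 < x) (s : ℂ) :
    Gp x s = ∑' j, bcoef s j * Complex.exp ((s + (j:ℂ)) * ((Real.log x : ℝ) : ℂ)) := by
  rw [Gp]
  apply tsum_congr
  intro j
  congr 1
  rw [Complex.cpow_def_of_ne_zero (by exact_mod_cast hx.ne' : (x:ℂ) ≠ 0),
    Complex.ofReal_log hx.le, mul_comm]

lemma sub_eq (x : ℝ) (hx : 0 < x) (s : ℂ) :
    Gm x s - Gp x s = ∑' j, Tf ((Real.log x : ℝ) : ℂ) j s := by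
  rw [Gm, Gp_eq x hx (-s), Gp_eq x hx s,
    ← Summable.tsum_sub (summable_term (-s) _) (summable_term s _)]
  exact tsum_congr fun j => rfl

lemma Tf_differentiable (z : ℂ) (j : ℕ) : Differentiable ℂ (Tf z j) := by
  apply Differentiable.sub
  · apply Differentiable.mul
    · exact (bcoef_differentiable j).comp differentiable_neg
    · apply Complex.differentiable_exp.comp
      fun_prop
  · apply Differentiable.mul
    · exact bcoef_differentiable j
    · apply Complex.differentiable_exp.comp
      fun_prop

lemma Tf_hasDerivAt (l j : ℕ) (z : ℂ) :
    HasDerivAt (Tf z j) (A0 l j z) ((l:ℂ)/2) := by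
  have hneg : HasDerivAt (fun s : ℂ => -s) (-1 : ℂ) ((l:ℂ)/2) := (hasDerivAt_id _).neg
  have h1 : HasDerivAt (fun s : ℂ => bcoef (-s) j) (dbc j (-((l:ℂ)/2)) * (-1)) ((l:ℂ)/2) :=
    (bcoef_hasDerivAt j (-((l:ℂ)/2))).comp _ hneg
  have hlin1 : HasDerivAt (fun s : ℂ => (-s + (j:ℂ)) * z) ((-1) * z) ((l:ℂ)/2) := by
    exact (hneg.add_const (j:ℂ)).mul_const z
  have h2 : HasDerivAt (fun s : ℂ => Complex.exp ((-s + (j:ℂ)) * z))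
      (Complex.exp ((-((l:ℂ)/2) + (j:ℂ)) * z) * ((-1) * z)) ((l:ℂ)/2) := hlin1.cexp
  have h3 : HasDerivAt (fun s : ℂ => bcoef s j) (dbc j ((l:ℂ)/2)) ((l:ℂ)/2) :=
    bcoef_hasDerivAt j _
  have hlin2 : HasDerivAt (fun s : ℂ => (s + (j:ℂ)) * z) ((1:ℂ) * z) ((l:ℂ)/2) := by
    exact ((hasDerivAt_id _).add_const (j:ℂ)).mul_const z
  have h4 : HasDerivAt (fun s : ℂ => Complex.exp ((s + (j:ℂ)) * z))
      (Complex.exp ((((l:ℂ)/2) + (j:ℂ)) * z) * ((1:ℂ) * z)) ((l:ℂ)/2) := hlin2.cexp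
  have htotal := (h1.mul h2).sub (h3.mul h4)
  refine htotal.congr_deriv ?_
  simp only [A0, te, cm1, dm1, cp1, dp1, muM, muP]
  rw [show ((j:ℂ) - (l:ℂ)/2) * z = (-((l:ℂ)/2) + (j:ℂ)) * z from by ring,
    show ((j:ℂ) + (l:ℂ)/2) * z = ((l:ℂ)/2 + (j:ℂ)) * z from by ring]
  ring

lemma wl_eq_Wf (l : ℕ) (x : ℝ) (hx : 0 < x) :
    wl l x = Wf l ((Real.log x : ℝ) : ℂ) := by
  set z : ℂ := ((Real.log x : ℝ) : ℂ) with hz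
  have hfun : (fun s => Gm x s - Gp x s) = fun s => ∑' j, Tf z j s := by
    funext s
    exact sub_eq x hx s
  obtain ⟨C1, hC1, hb1⟩ := bcoef_bound (-((l:ℂ)/2))
  obtain ⟨C2, hC2, hb2⟩ := bcoef_bound ((l:ℂ)/2)
  set b : ℝ := ‖((l:ℂ)/2)‖ + 1 with hb
  have hbound : ∀ (j : ℕ), ∀ w ∈ ball ((l:ℂ)/2) 1,
      ‖Tf z j w‖ ≤ (C1 + C2) * Real.exp (b * ‖z‖) * ((Real.exp ‖z‖) ^ j / j.factorial) := by
    intro j s hs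
    have hfac : (0 : ℝ) < (j.factorial : ℝ) := by exact_mod_cast j.factorial_pos
    have hs1 : s ∈ closedBall ((l:ℂ)/2) 1 := ball_subset_closedBall hs
    have hs2 : -s ∈ closedBall (-((l:ℂ)/2)) 1 := by
      rw [mem_closedBall_iff_norm] at hs1 ⊢
      rw [show -s - -((l:ℂ)/2) = -(s - (l:ℂ)/2) from by ring, norm_neg]
      exact hs1
    have hnorms : ‖s‖ ≤ b := by
      rw [mem_closedBall_iff_norm] at hs1
      rw [hb]
      calc ‖s‖ = ‖s - (l:ℂ)/2 + (l:ℂ)/2‖ := by ring_nf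
        _ ≤ ‖s - (l:ℂ)/2‖ + ‖((l:ℂ)/2)‖ := norm_add_le _ _
        _ ≤ ‖((l:ℂ)/2)‖ + 1 := by linarith
    have hc1 : ‖bcoef (-s) j‖ ≤ C1 / j.factorial := by
      rw [le_div_iff₀ hfac]; exact hb1 j (-s) hs2
    have hc2 : ‖bcoef s j‖ ≤ C2 / j.factorial := by
      rw [le_div_iff₀ hfac]; exact hb2 j s hs1
    have hmu1 : ‖-s + (j:ℂ)‖ ≤ b + j := by
      apply (norm_add_le _ _).trans
      rw [norm_neg, Complex.norm_natCast]
      linarith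
    have hmu2 : ‖s + (j:ℂ)‖ ≤ b + j := by
      apply (norm_add_le _ _).trans
      rw [Complex.norm_natCast]
      linarith
    have he1 : ‖Complex.exp ((-s + (j:ℂ)) * z)‖ ≤ Real.exp ((b + j) * ‖z‖) :=
      norm_exp_le _ _ _ _ hmu1 le_rfl (norm_nonneg z)
    have he2 : ‖Complex.exp ((s + (j:ℂ)) * z)‖ ≤ Real.exp ((b + j) * ‖z‖) :=
      norm_exp_le _ _ _ _ hmu2 le_rfl (norm_nonneg z)
    calc ‖Tf z j s‖ ≤ ‖bcoef (-s) j * Complex.exp ((-s + (j:ℂ)) * z)‖ +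
          ‖bcoef s j * Complex.exp ((s + (j:ℂ)) * z)‖ := norm_sub_le _ _
      _ ≤ (C1 / j.factorial) * Real.exp ((b + j) * ‖z‖) +
          (C2 / j.factorial) * Real.exp ((b + j) * ‖z‖) := by
          rw [norm_mul, norm_mul]
          exact add_le_add
            (mul_le_mul hc1 he1 (norm_nonneg _) (by positivity))
            (mul_le_mul hc2 he2 (norm_nonneg _) (by positivity))
      _ = (C1 + C2) * Real.exp (b * ‖z‖) * ((Real.exp ‖z‖) ^ j / j.factorial) := by
          rw [show (b + (j:ℝ)) * ‖z‖ = b * ‖z‖ + (j:ℝ) * ‖z‖ from by ring,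
            Real.exp_add, ← Real.exp_nat_mul]
          ring
  have hmem : ((l:ℂ)/2) ∈ ball ((l:ℂ)/2) 1 := mem_ball_self one_pos
  have hT := hasDerivAt_tsum_of_bound (F := fun j => Tf z j)
    (fun j => Tf_differentiable z j)
    (summable_CR ((C1 + C2) * Real.exp (b * ‖z‖)) (Real.exp ‖z‖)) hbound hmem
  rw [wl, hfun, hT.deriv]
  exact tsum_congr fun j => (Tf_hasDerivAt l j z).deriv

end YukawaAux

open YukawaAux in
/-- `w_l` is twice differentiable on `(0,∞)` and solves the Yukawa
equation `x²w'' + xw' − (x + l²/4)w = 0` there. -/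
theorem wl_solves_yukawa (l : ℕ) (hl : 0 < l) :
    ∃ w' w'' : ℝ → ℂ,
      (∀ x : ℝ, 0 < x → HasDerivAt (wl l) (w' x) x) ∧
      (∀ x : ℝ, 0 < x → HasDerivAt w' (w'' x) x) ∧
      (∀ x : ℝ, 0 < x →
        (x : ℂ) ^ 2 * w'' x + (x : ℂ) * w' x -
          ((x : ℂ) + (l : ℂ) ^ 2 / 4) * wl l x = 0) := by
  refine ⟨fun x => (x : ℂ)⁻¹ * W1 l ((Real.log x : ℝ) : ℂ),
    fun x => (x : ℂ)⁻¹ * (x : ℂ)⁻¹ *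
      (W2 l ((Real.log x : ℝ) : ℂ) - W1 l ((Real.log x : ℝ) : ℂ)), ?_, ?_, ?_⟩
  · intro x hx
    have hx0 : (x : ℂ) ≠ 0 := by exact_mod_cast hx.ne'
    have h1 : HasDerivAt (Wf l) (W1 l ((Real.log x : ℝ) : ℂ)) ((Real.log x : ℝ) : ℂ) :=
      Wf_hasDerivAt l _
    have h2 : HasDerivAt (fun t : ℝ => Wf l ((t : ℝ) : ℂ)) (W1 l ((Real.log x : ℝ) : ℂ))
        (Real.log x) := h1.comp_ofReal
    have h3 : HasDerivAt Real.log x⁻¹ x := Real.hasDerivAt_log hx.ne'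
    have h4 : HasDerivAt (fun t : ℝ => Wf l ((Real.log t : ℝ) : ℂ))
        (x⁻¹ • W1 l ((Real.log x : ℝ) : ℂ)) x := HasDerivAt.scomp x h2 h3
    have h5 : x⁻¹ • W1 l ((Real.log x : ℝ) : ℂ) = (x : ℂ)⁻¹ * W1 l ((Real.log x : ℝ) : ℂ) := by
      rw [Complex.real_smul, Complex.ofReal_inv]
    rw [h5] at h4
    have heq : wl l =ᶠ[nhds x] fun t : ℝ => Wf l ((Real.log t : ℝ) : ℂ) := by
      filter_upwards [eventually_gt_nhds hx] with t ht
      exact wl_eq_Wf l t ht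
    exact h4.congr_of_eventuallyEq heq
  · intro x hx
    have hx0 : (x : ℂ) ≠ 0 := by exact_mod_cast hx.ne'
    have hA : HasDerivAt (fun t : ℝ => ((t : ℝ) : ℂ)⁻¹) (-(((x : ℝ) : ℂ) ^ 2)⁻¹) x :=
      (hasDerivAt_inv hx0).comp_ofReal
    have h1 : HasDerivAt (W1 l) (W2 l ((Real.log x : ℝ) : ℂ)) ((Real.log x : ℝ) : ℂ) :=
      W1_hasDerivAt l _
    have h2 : HasDerivAt (fun t : ℝ => W1 l ((t : ℝ) : ℂ)) (W2 l ((Real.log x : ℝ) : ℂ))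
        (Real.log x) := h1.comp_ofReal
    have h3 : HasDerivAt Real.log x⁻¹ x := Real.hasDerivAt_log hx.ne'
    have hB : HasDerivAt (fun t : ℝ => W1 l ((Real.log t : ℝ) : ℂ))
        (x⁻¹ • W2 l ((Real.log x : ℝ) : ℂ)) x := HasDerivAt.scomp x h2 h3
    have h6 := hA.mul hB
    refine h6.congr_deriv ?_
    rw [Complex.real_smul, Complex.ofReal_inv]
    field_simp
    ring
  · intro x hx
    have hx0 : (x : ℂ) ≠ 0 := by exact_mod_cast hx.ne'
    have hexp : Complex.exp ((Real.log x : ℝ) : ℂ) = (x : ℂ) := by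
      rw [← Complex.ofReal_exp, Real.exp_log hx]
    simp only
    rw [wl_eq_Wf l x hx, W2_eq l ((Real.log x : ℝ) : ℂ), hexp]
    field_simp
    ring
end

section
/- Let s ∈ ℂ with Re(s) = 0 and s ≠ 0, and suppose G_+(1,s) ≠ 0. Define S(s) = −G_−(1,s)·Γ(1−2s)/(G_+(1,s)·Γ(1+2s)) and u(x) = Γ(1−2s)·G_−(x,s) + S(s)·Γ(1+2s)·G_+(x,s) for x > 0. Then u satisfies x²u'' + xu' − (x+s²)u = 0 on (0,∞), u(1) = 0, and there exists C ≥ 0 such that |u(x) − x^{−s} − S(s)·x^{s}| ≤ C·x for all x ∈ (0,1]. -/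
set_option maxHeartbeats 1000000

open Complex

namespace YukAux

noncomputable def sFun (c : ℕ → ℂ) (x : ℝ) : ℂ := ∑' j : ℕ, c j * (x : ℂ) ^ j

noncomputable def shf (c : ℕ → ℂ) : ℕ → ℂ := fun j => ((j : ℂ) + 1) * c (j + 1)

def Dec (c : ℕ → ℂ) (B : ℝ) : Prop := ∀ j, ‖c j‖ ≤ B / ((j.factorial : ℝ)) ^ 2

lemma Dec.nonneg {c : ℕ → ℂ} {B : ℝ} (h : Dec c B) : 0 ≤ B :=
  le_trans (norm_nonneg (c 0)) (by simpa using h 0)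

lemma dec_shf {c : ℕ → ℂ} {B : ℝ} (h : Dec c B) : Dec (shf c) B := by
  intro j
  have h1 := h (j + 1)
  have hfac : ((j+1).factorial : ℝ) = ((j:ℝ)+1) * (j.factorial : ℝ) := by
    push_cast [Nat.factorial_succ]; ring
  have hj : (0:ℝ) < (j.factorial : ℝ) := by positivity
  have hj1 : (0:ℝ) < (j:ℝ) + 1 := by positivity
  have hnorm : ‖shf c j‖ = ((j:ℝ)+1) * ‖c (j+1)‖ := by
    rw [shf, norm_mul]
    congr 1
    have : ((j:ℂ)+1) = ((j+1 : ℕ) : ℂ) := by push_cast; ring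
    rw [this, Complex.norm_natCast]
    push_cast; ring
  rw [hnorm]
  have key : ((j:ℝ)+1) * (B / ((j+1).factorial : ℝ)^2) ≤ B / (j.factorial : ℝ)^2 := by
    rw [hfac, mul_pow, mul_div_assoc']
    rw [div_le_div_iff₀ (by positivity) (by positivity)]
    have hB := h.nonneg
    have e1 : ((j:ℝ)+1) * B * (j.factorial:ℝ)^2 * 1
        ≤ ((j:ℝ)+1) * B * (j.factorial:ℝ)^2 * (((j:ℝ)+1)) := by
      have : (1:ℝ) ≤ (j:ℝ)+1 := by linarith [Nat.cast_nonneg (α := ℝ) j]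
      exact mul_le_mul_of_nonneg_left this (by positivity)
    calc ((j:ℝ)+1) * B * (j.factorial:ℝ)^2
        = ((j:ℝ)+1) * B * (j.factorial:ℝ)^2 * 1 := by ring
      _ ≤ ((j:ℝ)+1) * B * (j.factorial:ℝ)^2 * ((j:ℝ)+1) := e1
      _ = B * (((j:ℝ)+1)^2 * (j.factorial:ℝ)^2) := by ring
  exact le_trans (mul_le_mul_of_nonneg_left h1 (le_of_lt hj1)) key

lemma Dec.summable_norm {c : ℕ → ℂ} {B : ℝ} (h : Dec c B) (x : ℝ) :
    Summable (fun j => ‖c j * (x:ℂ)^j‖) := by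
  refine ((Real.summable_pow_div_factorial |x|).mul_left B).of_nonneg_of_le
    (fun j => norm_nonneg _) (fun j => ?_)
  have hj : (1:ℝ) ≤ (j.factorial : ℝ) := by
    exact_mod_cast Nat.one_le_iff_ne_zero.mpr (Nat.factorial_ne_zero j)
  have hj0 : (0:ℝ) < (j.factorial : ℝ) := by positivity
  have h1 : ‖c j * (x:ℂ)^j‖ = ‖c j‖ * |x|^j := by
    rw [norm_mul, norm_pow, Complex.norm_real, Real.norm_eq_abs]
  rw [h1]
  have h2 : ‖c j‖ * |x|^j ≤ (B / (j.factorial:ℝ)^2) * |x|^j :=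
    mul_le_mul_of_nonneg_right (h j) (by positivity)
  refine h2.trans ?_
  have hff : (j.factorial:ℝ) ≤ (j.factorial:ℝ)^2 := by nlinarith
  have key : B * |x|^j / (j.factorial:ℝ)^2 ≤ B * |x|^j / (j.factorial:ℝ) :=
    div_le_div_of_nonneg_left (mul_nonneg h.nonneg (by positivity)) hj0 hff
  calc B / (j.factorial:ℝ)^2 * |x|^j = B * |x|^j / (j.factorial:ℝ)^2 := by ring
    _ ≤ B * |x|^j / (j.factorial:ℝ) := key
    _ = B * (|x|^j / (j.factorial:ℝ)) := by ring

lemma Dec.summable {c : ℕ → ℂ} {B : ℝ} (h : Dec c B) (x : ℝ) :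
    Summable (fun j => c j * (x:ℂ)^j) :=
  Summable.of_norm (h.summable_norm x)


lemma dec_summable_u {B R : ℝ} (hB : 0 ≤ B) (hR : 1 ≤ R) :
    Summable (fun j : ℕ => B * (((j:ℝ)+1) * R^j / (j.factorial:ℝ)^2)) := by
  have hR0 : (0:ℝ) ≤ R := le_trans zero_le_one hR
  refine ((Real.summable_pow_div_factorial (2*R)).mul_left B).of_nonneg_of_le
    (fun j => by positivity) (fun j => ?_)
  have hj : (0:ℝ) < (j.factorial : ℝ) := by positivity
  have hj1 : (1:ℝ) ≤ (j.factorial : ℝ) := by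
    exact_mod_cast Nat.one_le_iff_ne_zero.mpr (Nat.factorial_ne_zero j)
  have h2p : ((j:ℝ)+1) ≤ 2^j := by exact_mod_cast (Nat.lt_two_pow_self (n := j))
  have hff : (j.factorial:ℝ) ≤ (j.factorial:ℝ)^2 := by nlinarith
  apply mul_le_mul_of_nonneg_left _ hB
  rw [mul_pow, div_le_div_iff₀ (by positivity) hj]
  calc ((j:ℝ)+1) * R^j * (j.factorial:ℝ)
      ≤ 2^j * R^j * (j.factorial:ℝ)^2 := by
        apply mul_le_mul
        · exact mul_le_mul_of_nonneg_right h2p (by positivity)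
        · exact hff
        · exact hj.le
        · positivity

lemma hasDerivAt_sFun {c : ℕ → ℂ} {B : ℝ} (h : Dec c B) (x : ℝ) :
    HasDerivAt (sFun c) (sFun (shf c) x) x := by
  set R : ℝ := |x| + 1 with hR
  have hR1 : (1:ℝ) ≤ R := by simp [hR]
  have hR0 : (0:ℝ) ≤ R := le_trans zero_le_one hR1
  have hxmem : x ∈ Set.Ioo (-R) R := by
    constructor
    · have := neg_abs_le x; simp only [hR]; linarith
    · have := le_abs_self x; simp only [hR]; linarith
  have hu := dec_summable_u h.nonneg hR1
  have hbound : ∀ (j : ℕ) (y : ℝ), y ∈ Set.Ioo (-R) R →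
      ‖c j * ((j:ℂ) * (y:ℂ)^(j-1))‖ ≤ B * (((j:ℝ)+1) * R^j / (j.factorial:ℝ)^2) := by
    intro j y hy
    have hyR : |y| ≤ R := by
      rw [abs_le]; exact ⟨hy.1.le, hy.2.le⟩
    have h1 : ‖c j * ((j:ℂ) * (y:ℂ)^(j-1))‖ = ‖c j‖ * ((j:ℝ) * |y|^(j-1)) := by
      rw [norm_mul, norm_mul, norm_pow, Complex.norm_natCast, Complex.norm_real,
        Real.norm_eq_abs]
    rw [h1]
    have hy0 : (0:ℝ) ≤ |y| := abs_nonneg y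
    have h2 : |y|^(j-1) ≤ R^(j-1) := pow_le_pow_left₀ hy0 hyR _
    have h3 : R^(j-1) ≤ R^j := pow_le_pow_right₀ hR1 (Nat.sub_le j 1)
    have h4 : (j:ℝ) * |y|^(j-1) ≤ ((j:ℝ)+1) * R^j := by
      have : (j:ℝ) * |y|^(j-1) ≤ (j:ℝ) * R^j :=
        mul_le_mul_of_nonneg_left (h2.trans h3) (Nat.cast_nonneg j)
      have h5 : (j:ℝ) * R^j ≤ ((j:ℝ)+1) * R^j :=
        mul_le_mul_of_nonneg_right (by linarith) (by positivity)
      linarith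
    calc ‖c j‖ * ((j:ℝ) * |y|^(j-1))
        ≤ (B / (j.factorial:ℝ)^2) * (((j:ℝ)+1) * R^j) := by
          apply mul_le_mul (h j) h4 (by positivity)
          have := h.nonneg; positivity
      _ = B * (((j:ℝ)+1) * R^j / (j.factorial:ℝ)^2) := by ring
  have hderiv : ∀ (j : ℕ) (y : ℝ), y ∈ Set.Ioo (-R) R →
      HasDerivAt (fun z : ℝ => c j * (z:ℂ)^j) (c j * ((j:ℂ) * (y:ℂ)^(j-1))) y := by
    intro j y _
    exact ((hasDerivAt_pow j ((y:ℝ):ℂ)).comp_ofReal).const_mul (c j)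
  have key := hasDerivAt_tsum_of_isPreconnected hu isOpen_Ioo
    (convex_Ioo (-R) R).isPreconnected hderiv hbound hxmem
    (h.summable x) hxmem
  have hs1 : Summable (fun j => c j * ((j:ℂ) * (x:ℂ)^(j-1))) :=
    Summable.of_norm_bounded hu (fun j => hbound j x hxmem)
  have hval : (∑' j, c j * ((j:ℂ) * (x:ℂ)^(j-1))) = sFun (shf c) x := by
    rw [Summable.tsum_eq_zero_add hs1]
    simp only [Nat.cast_zero, zero_mul, mul_zero, zero_add]
    rw [sFun]
    apply tsum_congr
    intro j
    have h11 : (j + 1 - 1 : ℕ) = j := rfl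
    rw [h11]
    simp only [shf]
    push_cast
    ring
  rw [← hval]
  exact key


lemma sFun_ode {c : ℕ → ℂ} {B : ℝ} (h : Dec c B) (s : ℂ)
    (hrec : ∀ j : ℕ, ((j:ℂ)+1) * (2*s + ((j:ℂ)+1)) * c (j+1) = c j) (x : ℝ) :
    (x:ℂ) * sFun (shf (shf c)) x + (2*s+1) * sFun (shf c) x - sFun c x = 0 := by
  have h1 := dec_shf h
  have h2 := dec_shf h1
  have S0 := h.summable x
  have S1 := h1.summable x
  have S2 := h2.summable x
  have e2 : (x:ℂ) * sFun (shf (shf c)) x = ∑' j : ℕ, shf (shf c) j * (x:ℂ)^(j+1) := by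
    rw [sFun, ← tsum_mul_left]
    exact tsum_congr fun j => by ring
  have e1 : (2*s+1) * sFun (shf c) x
      = (2*s+1) * (shf c 0) + ∑' j : ℕ, (2*s+1) * shf c (j+1) * (x:ℂ)^(j+1) := by
    rw [sFun, ← tsum_mul_left, Summable.tsum_eq_zero_add (S1.mul_left _)]
    simp only [pow_zero, mul_one]
    congr 1
    exact tsum_congr fun j => by ring
  have e0 : sFun c x = c 0 + ∑' j : ℕ, c (j+1) * (x:ℂ)^(j+1) := by
    rw [sFun, Summable.tsum_eq_zero_add S0]
    simp
  rw [e2, e1, e0]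
  have T2 : Summable (fun j : ℕ => shf (shf c) j * (x:ℂ)^(j+1)) :=
    (S2.mul_left (x:ℂ)).congr fun j => by ring
  have T1 : Summable (fun j : ℕ => (2*s+1) * shf c (j+1) * (x:ℂ)^(j+1)) := by
    have h' := (summable_nat_add_iff 1).2 (S1.mul_left (2*s+1))
    exact h'.congr fun j => by ring
  have T0 : Summable (fun j : ℕ => c (j+1) * (x:ℂ)^(j+1)) :=
    (summable_nat_add_iff 1).2 S0
  have comb : (∑' j : ℕ, shf (shf c) j * (x:ℂ)^(j+1))
      + (∑' j : ℕ, (2*s+1) * shf c (j+1) * (x:ℂ)^(j+1))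
      - (∑' j : ℕ, c (j+1) * (x:ℂ)^(j+1))
      = ∑' j : ℕ, ((shf (shf c) j + (2*s+1) * shf c (j+1) - c (j+1)) * (x:ℂ)^(j+1)) := by
    rw [← Summable.tsum_add T2 T1, ← Summable.tsum_sub (T2.add T1) T0]
    exact tsum_congr fun j => by ring
  have coeff : ∀ j : ℕ, shf (shf c) j + (2*s+1) * shf c (j+1) - c (j+1) = 0 := by
    intro j
    have hr := hrec (j+1)
    simp only [shf]
    push_cast at hr ⊢
    linear_combination hr
  have hzero : (∑' j : ℕ, shf (shf c) j * (x:ℂ)^(j+1))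
      + (∑' j : ℕ, (2*s+1) * shf c (j+1) * (x:ℂ)^(j+1))
      - (∑' j : ℕ, c (j+1) * (x:ℂ)^(j+1)) = 0 := by
    rw [comb]
    have : ∀ j : ℕ, (shf (shf c) j + (2*s+1) * shf c (j+1) - c (j+1)) * (x:ℂ)^(j+1)
        = 0 := fun j => by rw [coeff j, zero_mul]
    rw [tsum_congr this, tsum_zero]
  have const : (2*s+1) * (shf c 0) - c 0 = 0 := by
    have hr := hrec 0
    simp only [shf]
    push_cast at hr ⊢
    linear_combination hr
  linear_combination hzero + const


lemma hasDerivAt_cpow_real (a : ℂ) {x : ℝ} (hx : 0 < x) :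
    HasDerivAt (fun y : ℝ => (y:ℂ)^a) (a * (x:ℂ)^(a-1)) x :=
  ((Complex.hasStrictDerivAt_cpow_const
    (Complex.ofReal_mem_slitPlane.2 hx)).hasDerivAt).comp_ofReal

lemma hasDerivAt_w (a : ℂ) {c : ℕ → ℂ} {B : ℝ} (h : Dec c B) {x : ℝ} (hx : 0 < x) :
    HasDerivAt (fun y : ℝ => (y:ℂ)^a * sFun c y)
      (a * (x:ℂ)^(a-1) * sFun c x + (x:ℂ)^a * sFun (shf c) x) x :=
  (hasDerivAt_cpow_real a hx).mul (hasDerivAt_sFun h x)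

end YukAux

open YukAux

/-- The generalized eigenfunction
`u(x) = Γ(1−2s)·G_−(x,s) + S(s)·Γ(1+2s)·G_+(x,s)`. -/
noncomputable def uScat (s : ℂ) (x : ℝ) : ℂ :=
  Complex.Gamma (1 - 2 * s) * Gm x s + Syu s * Complex.Gamma (1 + 2 * s) * Gp x s

lemma bcoef_arg_re {s : ℂ} (hre : s.re = 0) (j : ℕ) : (2*s + (j:ℂ) + 1).re = (j:ℝ) + 1 := by
  simp [Complex.add_re, Complex.mul_re, hre]

lemma bcoef_rec {s : ℂ} (hre : s.re = 0) (j : ℕ) :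
    ((j:ℂ)+1) * (2*s + ((j:ℂ)+1)) * bcoef s (j+1) = bcoef s j := by
  have hpos : 0 < (2*s + (j:ℂ) + 1).re := by
    rw [bcoef_arg_re hre]; positivity
  have hg : 2*s + (j:ℂ) + 1 ≠ 0 := fun h => by simp [h] at hpos
  have hΓ : Complex.Gamma (2*s + (j:ℂ) + 1) ≠ 0 := Complex.Gamma_ne_zero_of_re_pos hpos
  have hgam : Complex.Gamma (2*s + ((j+1:ℕ):ℂ) + 1)
      = (2*s + (j:ℂ) + 1) * Complex.Gamma (2*s + (j:ℂ) + 1) := by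
    have e : (2*s + ((j+1:ℕ):ℂ) + 1) = (2*s + (j:ℂ) + 1) + 1 := by push_cast; ring
    rw [e, Complex.Gamma_add_one _ hg]
  rw [bcoef, bcoef, hgam]
  have hfac : (((j+1).factorial : ℕ) : ℂ) = ((j:ℂ)+1) * ((j.factorial : ℕ) : ℂ) := by
    push_cast [Nat.factorial_succ]; ring
  rw [hfac]
  have hjne : ((j:ℂ)+1) ≠ 0 := Nat.cast_add_one_ne_zero j
  have hfne : ((j.factorial : ℕ):ℂ) ≠ 0 := Nat.cast_ne_zero.2 (Nat.factorial_ne_zero j)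
  field_simp
  ring

lemma bcoef_dec {s : ℂ} (hre : s.re = 0) : Dec (bcoef s) ‖bcoef s 0‖ := by
  intro j
  induction j with
  | zero => simp
  | succ j ih =>
    have hrec := bcoef_rec hre j
    have hne1 : ((j:ℂ)+1) ≠ 0 := Nat.cast_add_one_ne_zero j
    have hrez : (2*s + ((j:ℂ)+1)).re = (j:ℝ) + 1 := by
      have := bcoef_arg_re hre j
      have e : 2*s + ((j:ℂ)+1) = 2*s + (j:ℂ) + 1 := by ring
      rw [e, this]
    have hne2 : (2*s + ((j:ℂ)+1)) ≠ 0 := by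
      intro h; rw [h] at hrez; simp at hrez
      have : (0:ℝ) ≤ (j:ℝ) := Nat.cast_nonneg j
      linarith
    have heq : bcoef s (j+1) = bcoef s j / (((j:ℂ)+1) * (2*s + ((j:ℂ)+1))) := by
      rw [eq_div_iff (mul_ne_zero hne1 hne2)]
      linear_combination hrec
    rw [heq, norm_div, norm_mul]
    have h1 : ‖(j:ℂ)+1‖ = (j:ℝ)+1 := by
      have e : ((j:ℂ)+1) = ((j+1 : ℕ) : ℂ) := by push_cast; ring
      rw [e, Complex.norm_natCast]; push_cast; ring
    have h2 : ((j:ℝ)+1) ≤ ‖2*s + ((j:ℂ)+1)‖ := by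
      rw [← hrez]
      exact Complex.re_le_norm _
    have hj1 : (0:ℝ) < (j:ℝ)+1 := by positivity
    have hfac : ((j+1).factorial : ℝ) = ((j:ℝ)+1) * (j.factorial : ℝ) := by
      push_cast [Nat.factorial_succ]; ring
    have hfj : (0:ℝ) < (j.factorial : ℝ) := by positivity
    have hden : ((j:ℝ)+1) * ((j:ℝ)+1) ≤ ‖(j:ℂ)+1‖ * ‖2*s + ((j:ℂ)+1)‖ := by
      rw [h1]
      exact mul_le_mul_of_nonneg_left h2 hj1.le
    have hBnn : (0:ℝ) ≤ ‖bcoef s 0‖ := norm_nonneg _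
    calc ‖bcoef s j‖ / (‖(j:ℂ)+1‖ * ‖2*s + ((j:ℂ)+1)‖)
        ≤ (‖bcoef s 0‖ / (j.factorial:ℝ)^2) / (((j:ℝ)+1) * ((j:ℝ)+1)) := by
          apply div_le_div₀ (by positivity) ih (by positivity) hden
      _ = ‖bcoef s 0‖ / ((j+1).factorial : ℝ)^2 := by
          rw [hfac, mul_pow, div_div]
          congr 1
          ring

lemma Gp_eq_sFun {x : ℝ} (hx : 0 < x) (s : ℂ) :
    Gp x s = (x:ℂ)^s * sFun (bcoef s) x := by
  rw [Gp, sFun, ← tsum_mul_left]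
  refine tsum_congr fun j => ?_
  rw [Complex.cpow_add _ _ (Complex.ofReal_ne_zero.2 hx.ne'), Complex.cpow_natCast]
  ring


/-- for `Re s = 0`, `s ≠ 0`, `G_+(1,s) ≠ 0`, the function `u = uScat s`
solves the Yukawa equation on `(0,∞)`, satisfies `u(1) = 0`, and
`u(x) = x^{−s} + S(s)x^{s} + O(x)` on `(0,1]`. -/
theorem uScat_scattering_solution (s : ℂ) (hre : s.re = 0) (hs : s ≠ 0)
    (hG : Gp 1 s ≠ 0) :
    (∃ u' u'' : ℝ → ℂ,
      (∀ x : ℝ, 0 < x → HasDerivAt (uScat s) (u' x) x) ∧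
      (∀ x : ℝ, 0 < x → HasDerivAt u' (u'' x) x) ∧
      (∀ x : ℝ, 0 < x →
        (x : ℂ) ^ 2 * u'' x + (x : ℂ) * u' x - ((x : ℂ) + s ^ 2) * uScat s x = 0)) ∧
    uScat s 1 = 0 ∧
    ∃ C : ℝ, 0 ≤ C ∧ ∀ x : ℝ, 0 < x → x ≤ 1 →
      ‖uScat s x - (x : ℂ) ^ (-s) - Syu s * (x : ℂ) ^ s‖ ≤ C * x := by
  have hre' : (-s).re = 0 := by simp [hre]
  set cp := bcoef s with hcp
  set cm := bcoef (-s) with hcm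
  have hdp : Dec cp ‖cp 0‖ := bcoef_dec hre
  have hdm : Dec cm ‖cm 0‖ := bcoef_dec hre'
  have hdp1 := dec_shf hdp
  have hdm1 := dec_shf hdm
  have hrecp : ∀ j : ℕ, ((j:ℂ)+1) * (2*s + ((j:ℂ)+1)) * cp (j+1) = cp j :=
    fun j => bcoef_rec hre j
  have hrecm : ∀ j : ℕ, ((j:ℂ)+1) * (2*(-s) + ((j:ℂ)+1)) * cm (j+1) = cm j :=
    fun j => bcoef_rec hre' j
  have hΓp : Complex.Gamma (1 + 2*s) ≠ 0 := by
    apply Complex.Gamma_ne_zero_of_re_pos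
    simp [Complex.add_re, Complex.mul_re, hre]
  have hΓm : Complex.Gamma (1 - 2*s) ≠ 0 := by
    apply Complex.Gamma_ne_zero_of_re_pos
    simp [Complex.sub_re, Complex.mul_re, hre]
  set A := Complex.Gamma (1 - 2*s) with hA
  set Bc := Syu s * Complex.Gamma (1 + 2*s) with hBc
  have hu_eq : ∀ y : ℝ, 0 < y →
      uScat s y = A * ((y:ℂ)^(-s) * sFun cm y) + Bc * ((y:ℂ)^s * sFun cp y) := by
    intro y hy
    rw [uScat, Gm, Gp_eq_sFun hy s, Gp_eq_sFun hy (-s)]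
  refine ⟨?_, ?_, ?_⟩
  · -- ODE part
    refine ⟨fun x => A * ((-s) * ((x:ℂ)^(-s-1) * sFun cm x) + (x:ℂ)^(-s) * sFun (shf cm) x)
      + Bc * (s * ((x:ℂ)^(s-1) * sFun cp x) + (x:ℂ)^s * sFun (shf cp) x),
      fun x => A * ((-s) * ((-s-1) * (x:ℂ)^(-s-1-1) * sFun cm x + (x:ℂ)^(-s-1) * sFun (shf cm) x)
          + ((-s) * (x:ℂ)^(-s-1) * sFun (shf cm) x + (x:ℂ)^(-s) * sFun (shf (shf cm)) x))
      + Bc * (s * ((s-1) * (x:ℂ)^(s-1-1) * sFun cp x + (x:ℂ)^(s-1) * sFun (shf cp) x)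
          + (s * (x:ℂ)^(s-1) * sFun (shf cp) x + (x:ℂ)^s * sFun (shf (shf cp)) x)),
      ?_, ?_, ?_⟩
    · intro x hx
      have base : HasDerivAt
          (fun y : ℝ => A * ((y:ℂ)^(-s) * sFun cm y) + Bc * ((y:ℂ)^s * sFun cp y))
          (A * ((-s) * (x:ℂ)^(-s-1) * sFun cm x + (x:ℂ)^(-s) * sFun (shf cm) x)
           + Bc * (s * (x:ℂ)^(s-1) * sFun cp x + (x:ℂ)^s * sFun (shf cp) x)) x :=
        ((hasDerivAt_w (-s) hdm hx).const_mul A).add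
          ((hasDerivAt_w s hdp hx).const_mul Bc)
      have hev : uScat s =ᶠ[nhds x]
          (fun y : ℝ => A * ((y:ℂ)^(-s) * sFun cm y) + Bc * ((y:ℂ)^s * sFun cp y)) :=
        Filter.eventually_of_mem (Ioi_mem_nhds hx) (fun y hy => hu_eq y hy)
      have hfin := base.congr_of_eventuallyEq hev
      convert hfin using 1
      beta_reduce
      · rfl
      ring
    · intro x hx
      have h1m := (hasDerivAt_w (-s-1) hdm hx).const_mul (-s)
      have h2m := hasDerivAt_w (-s) hdm1 hx
      have h1p := (hasDerivAt_w (s-1) hdp hx).const_mul s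
      have h2p := hasDerivAt_w s hdp1 hx
      exact ((h1m.add h2m).const_mul A).add ((h1p.add h2p).const_mul Bc)
    · intro x hx
      beta_reduce
      have hX : (x:ℂ) ≠ 0 := Complex.ofReal_ne_zero.2 hx.ne'
      have hodem := sFun_ode hdm (-s) hrecm x
      have hodep := sFun_ode hdp s hrecp x
      rw [hu_eq x hx]
      have cpow_step : ∀ a : ℂ, (x:ℂ)^(a+1) = (x:ℂ)^a * x := fun a => by
        rw [Complex.cpow_add _ _ hX, Complex.cpow_one]
      have em1 : (x:ℂ)^(-s-1) = (x:ℂ)^(-s-1-1) * x := by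
        have h := cpow_step (-s-1-1)
        rw [show (-s-1-1+1 : ℂ) = -s-1 from by ring] at h
        exact h
      have em0 : (x:ℂ)^(-s) = (x:ℂ)^(-s-1-1) * x * x := by
        have h := cpow_step (-s-1)
        rw [show (-s-1+1 : ℂ) = -s from by ring] at h
        rw [h, em1]
      have ep1 : (x:ℂ)^(s-1) = (x:ℂ)^(s-1-1) * x := by
        have h := cpow_step (s-1-1)
        rw [show (s-1-1+1 : ℂ) = s-1 from by ring] at h
        exact h
      have ep0 : (x:ℂ)^s = (x:ℂ)^(s-1-1) * x * x := by
        have h := cpow_step (s-1)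
        rw [show (s-1+1 : ℂ) = s from by ring] at h
        rw [h, ep1]
      rw [em0, em1, ep0, ep1]
      linear_combination (A * (x:ℂ)^(-s-1-1) * (x:ℂ)^3) * hodem
        + (Bc * (x:ℂ)^(s-1-1) * (x:ℂ)^3) * hodep
  · -- u(1) = 0
    have hkey : Syu s * Complex.Gamma (1+2*s) * Gp 1 s
        = -(Gm 1 s * Complex.Gamma (1-2*s)) := by
      rw [Syu]
      field_simp
    rw [uScat, hkey]
    ring
  · -- O(x) bound
    set Cm := ∑' j : ℕ, ‖A * cm (j+1)‖ with hCm
    set Cp := ∑' j : ℕ, ‖Bc * cp (j+1)‖ with hCpdef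
    have hnormm : Summable (fun j : ℕ => ‖cm j‖) := by
      have h0 := hdm.summable_norm 1
      exact h0.congr (fun j => by simp)
    have hnormp : Summable (fun j : ℕ => ‖cp j‖) := by
      have h0 := hdp.summable_norm 1
      exact h0.congr (fun j => by simp)
    have hsm : Summable (fun j : ℕ => ‖A * cm (j+1)‖) := by
      have h2 := (summable_nat_add_iff 1).2 hnormm
      exact (h2.mul_left ‖A‖).congr (fun j => (norm_mul A (cm (j+1))).symm)
    have hsp : Summable (fun j : ℕ => ‖Bc * cp (j+1)‖) := by
      have h2 := (summable_nat_add_iff 1).2 hnormp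
      exact (h2.mul_left ‖Bc‖).congr (fun j => (norm_mul Bc (cp (j+1))).symm)
    have hcm0 : A * cm 0 = 1 := by
      have e : (2 * (-s) + ((0:ℕ):ℂ) + 1) = 1 - 2*s := by push_cast; ring
      rw [hcm, bcoef, e]
      simp only [Nat.factorial_zero, Nat.cast_one, one_mul]
      rw [hA]
      exact mul_inv_cancel₀ hΓm
    have hcp0 : Bc * cp 0 = Syu s := by
      have e : (2 * s + ((0:ℕ):ℂ) + 1) = 1 + 2*s := by push_cast; ring
      rw [hcp, bcoef, e]
      simp only [Nat.factorial_zero, Nat.cast_one, one_mul]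
      rw [hBc, mul_assoc, mul_inv_cancel₀ hΓp, mul_one]
    refine ⟨Cm + Cp, ?_, ?_⟩
    · apply add_nonneg <;> exact tsum_nonneg (fun j => norm_nonneg _)
    · intro x hx hx1
      have habs : |x| = x := abs_of_pos hx
      have em : A * sFun cm x = 1 + ∑' j : ℕ, (A * cm (j+1)) * (x:ℂ)^(j+1) := by
        rw [sFun, ← tsum_mul_left, Summable.tsum_eq_zero_add ((hdm.summable x).mul_left A)]
        congr 1
        · simpa using hcm0
        · exact tsum_congr fun j => by ring
      have ep : Bc * sFun cp x = Syu s + ∑' j : ℕ, (Bc * cp (j+1)) * (x:ℂ)^(j+1) := by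
        rw [sFun, ← tsum_mul_left, Summable.tsum_eq_zero_add ((hdp.summable x).mul_left Bc)]
        congr 1
        · simpa using hcp0
        · exact tsum_congr fun j => by ring
      have key : uScat s x - (x:ℂ)^(-s) - Syu s * (x:ℂ)^s
          = (x:ℂ)^(-s) * (∑' j : ℕ, (A * cm (j+1)) * (x:ℂ)^(j+1))
          + (x:ℂ)^s * (∑' j : ℕ, (Bc * cp (j+1)) * (x:ℂ)^(j+1)) := by
        rw [hu_eq x hx]
        linear_combination ((x:ℂ)^(-s)) * em + ((x:ℂ)^s) * ep
      have hYn : ‖(x:ℂ)^(-s)‖ = 1 := by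
        rw [Complex.norm_cpow_eq_rpow_re_of_pos hx]
        simp [hre]
      have hZn : ‖(x:ℂ)^s‖ = 1 := by
        rw [Complex.norm_cpow_eq_rpow_re_of_pos hx, hre,
          Real.rpow_zero]
      have bnd : ∀ (w : ℕ → ℂ), Summable (fun j : ℕ => ‖w (j+1)‖) →
          ‖∑' j : ℕ, (w (j+1)) * (x:ℂ)^(j+1)‖ ≤ (∑' j : ℕ, ‖w (j+1)‖) * x := by
        intro w hw
        have hterm : ∀ j : ℕ, ‖(w (j+1)) * (x:ℂ)^(j+1)‖ ≤ ‖w (j+1)‖ * x := by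
          intro j
          rw [norm_mul, norm_pow, Complex.norm_real, Real.norm_eq_abs, habs]
          have hxp : x^(j+1) ≤ x := by
            calc x^(j+1) ≤ x^1 := pow_le_pow_of_le_one hx.le hx1 (by omega)
              _ = x := pow_one x
          exact mul_le_mul_of_nonneg_left hxp (norm_nonneg _)
        have hsum2 : Summable (fun j : ℕ => ‖(w (j+1)) * (x:ℂ)^(j+1)‖) :=
          (hw.mul_right x).of_nonneg_of_le (fun j => norm_nonneg _) hterm
        calc ‖∑' j : ℕ, (w (j+1)) * (x:ℂ)^(j+1)‖
            ≤ ∑' j : ℕ, ‖(w (j+1)) * (x:ℂ)^(j+1)‖ := norm_tsum_le_tsum_norm hsum2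
          _ ≤ ∑' j : ℕ, ‖w (j+1)‖ * x := Summable.tsum_le_tsum hterm hsum2 (hw.mul_right x)
          _ = (∑' j : ℕ, ‖w (j+1)‖) * x := tsum_mul_right
      rw [key]
      calc ‖(x:ℂ)^(-s) * (∑' j : ℕ, (A * cm (j+1)) * (x:ℂ)^(j+1))
            + (x:ℂ)^s * (∑' j : ℕ, (Bc * cp (j+1)) * (x:ℂ)^(j+1))‖
          ≤ ‖(x:ℂ)^(-s) * (∑' j : ℕ, (A * cm (j+1)) * (x:ℂ)^(j+1))‖
            + ‖(x:ℂ)^s * (∑' j : ℕ, (Bc * cp (j+1)) * (x:ℂ)^(j+1))‖ := norm_add_le _ _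
        _ = ‖∑' j : ℕ, (A * cm (j+1)) * (x:ℂ)^(j+1)‖
            + ‖∑' j : ℕ, (Bc * cp (j+1)) * (x:ℂ)^(j+1)‖ := by
            rw [norm_mul, norm_mul, hYn, hZn, one_mul, one_mul]
        _ ≤ Cm * x + Cp * x := add_le_add (bnd (fun k => A * cm k) hsm)
            (bnd (fun k => Bc * cp k) hsp)
        _ = (Cm + Cp) * x := by ring
end

section
/- Let τ ∈ ℝ, τ ≠ 0, and set s = iτ. If G_+(1,s) ≠ 0, then also G_−(1,s) ≠ 0 and the Yukawa scattering coefficient S(s) = −G_−(1,s)·Γ(1−2s)/(G_+(1,s)·Γ(1+2s)) satisfies |S(s)| = 1 (unitarity on the physical line Re s = 0). -/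
/-- unitarity on the physical line: for `s = iτ`, `τ ≠ 0`, with
`G_+(1,s) ≠ 0`, also `G_−(1,s) ≠ 0` and `|S(s)| = 1`. -/
theorem Syu_unitary_on_physical_line (τ : ℝ) (hτ : τ ≠ 0)
    (hG : Gp 1 (Complex.I * (τ : ℂ)) ≠ 0) :
    Gm 1 (Complex.I * (τ : ℂ)) ≠ 0 ∧
    ‖Syu (Complex.I * (τ : ℂ))‖ = 1 := by
  set s : ℂ := Complex.I * (τ : ℂ) with hs
  have hconj : (starRingEnd ℂ) s = -s := by
    simp [hs, Complex.conj_I]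
  have hkey : ∀ w : ℂ, (starRingEnd ℂ) (2 * s + w) = 2 * (-s) + (starRingEnd ℂ) w := by
    intro w
    rw [map_add, map_mul, hconj, map_ofNat]
  have hb : ∀ j : ℕ, bcoef (-s) j = (starRingEnd ℂ) (bcoef s j) := by
    intro j
    simp only [bcoef, map_inv₀, map_mul, Complex.conj_natCast, ← Complex.Gamma_conj]
    congr 3
    rw [show (2 * s + (j : ℂ) + 1) = 2 * s + ((j : ℂ) + 1) by ring, hkey,
      map_add, Complex.conj_natCast, map_one]
    ring
  have hGm : Gm 1 s = (starRingEnd ℂ) (Gp 1 s) := by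
    rw [Gm, Gp, Gp, starRingEnd_apply, tsum_star]
    congr 1
    funext j
    rw [star_mul', Complex.ofReal_one, Complex.one_cpow, Complex.one_cpow, star_one,
      mul_one, mul_one, hb j, starRingEnd_apply]
  have hGm0 : Gm 1 s ≠ 0 := by
    rw [hGm]; simpa using hG
  refine ⟨hGm0, ?_⟩
  have hΓconj : Complex.Gamma (1 - 2 * s) = (starRingEnd ℂ) (Complex.Gamma (1 + 2 * s)) := by
    rw [← Complex.Gamma_conj]
    congr 1
    rw [add_comm (1 : ℂ) (2 * s), hkey, map_one]
    ring
  have hΓ0 : Complex.Gamma (1 + 2 * s) ≠ 0 := by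
    apply Complex.Gamma_ne_zero_of_re_pos
    simp [hs]
  have habs : ‖Syu s‖
      = (‖Gm 1 s‖ * ‖Complex.Gamma (1 - 2 * s)‖) /
        (‖Gp 1 s‖ * ‖Complex.Gamma (1 + 2 * s)‖) := by
    rw [Syu, neg_mul, norm_div, norm_neg, norm_mul, norm_mul]
  rw [habs, hGm, hΓconj, Complex.norm_conj, Complex.norm_conj, div_self]
  exact mul_ne_zero (norm_ne_zero_iff.mpr hG) (norm_ne_zero_iff.mpr hΓ0)
end
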